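/- arXiv:2306.14718 — 3 statements merged into one kernel-verified Lean document; each statement's English description precedes it below -/
import Mathlib

section
/- Let X, Y be finitely supported with joint pmf p, and suppose the block graph of p (vertices are pairs (i,j) with p(i,j) > 0, edges between pairs sharing a row or column) is connected. If Z is jointly distributed with (X,Y) and I(X;Z|Y) = 0 and I(Y;Z|X) = 0, then Z is independent of the pair (X,Y); consequently I(X;Y|Z) = I(X;Y). -/
open Real BigOperators Finset

section Defs
variable {Ω : Type} [Fintype Ω]

/-- `p` is a probability mass function on the finite sample space `Ω`. -/
def IsPmf (p : Ω → ℝ) : Prop := (∀ ω, 0 ≤ p ω) ∧ ∑ ω, p ω = 1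

/-- Distribution of the random variable `f` under `p`. -/
noncomputable def distOf (p : Ω → ℝ) {α : Type} [Fintype α] [DecidableEq α]
    (f : Ω → α) : α → ℝ := fun a => ∑ ω, if f ω = a then p ω else 0

/-- Shannon entropy (in nats) of the random variable `f` under `p`. -/
noncomputable def ent (p : Ω → ℝ) {α : Type} [Fintype α] [DecidableEq α]
    (f : Ω → α) : ℝ := ∑ a, Real.negMulLog (distOf p f a)

/-- Mutual information `I(f;g)` under `p`. -/
noncomputable def mi (p : Ω → ℝ) {α β : Type} [Fintype α] [DecidableEq α]
    [Fintype β] [DecidableEq β] (f : Ω → α) (g : Ω → β) : ℝ :=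
  ent p f + ent p g - ent p (fun ω => (f ω, g ω))

/-- Conditional mutual information `I(f;g|h)` under `p`. -/
noncomputable def cmi (p : Ω → ℝ) {α β γ : Type} [Fintype α] [DecidableEq α]
    [Fintype β] [DecidableEq β] [Fintype γ] [DecidableEq γ]
    (f : Ω → α) (g : Ω → β) (h : Ω → γ) : ℝ :=
  ent p (fun ω => (f ω, h ω)) + ent p (fun ω => (g ω, h ω))
    - ent p (fun ω => (f ω, g ω, h ω)) - ent p h

end Defs

/-- Tension region of `(X,Y)`: the set of triples
`(I(X;Z|Y), I(Y;Z|X), I(X;Y|Z))` as `Z` ranges over all finitely supported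
random variables jointly distributed with `(X,Y)`. -/
def tension {Ω : Type} [Fintype Ω] {α β : Type} [Fintype α] [DecidableEq α]
    [Fintype β] [DecidableEq β] (p : Ω → ℝ) (X : Ω → α) (Y : Ω → β) :
    Set (ℝ × ℝ × ℝ) :=
  { t | ∃ (m : ℕ) (q : α × β × Fin m → ℝ), IsPmf q ∧
      distOf q (fun w => (w.1, w.2.1)) = distOf p (fun ω => (X ω, Y ω)) ∧
      t = (cmi q (fun w => w.1) (fun w => w.2.2) (fun w => w.2.1),
           cmi q (fun w => w.2.1) (fun w => w.2.2) (fun w => w.1),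
           cmi q (fun w => w.1) (fun w => w.2.1) (fun w => w.2.2)) }

/-- One step in the block graph: two support points in the same row or
column. -/
def blockStep {α β : Type} (f : α × β → ℝ) (u v : α × β) : Prop :=
  0 < f u ∧ 0 < f v ∧ (u.1 = v.1 ∨ u.2 = v.2)

set_option linter.unusedSectionVars false

namespace Stmt14Aux

variable {Ω : Type} [Fintype Ω]

lemma distOf_comp (p : Ω → ℝ) {α α' : Type} [Fintype α] [DecidableEq α]
    [Fintype α'] [DecidableEq α'] (f : Ω → α) (g : α → α') (a' : α') :
    distOf p (fun ω => g (f ω)) a' = ∑ a, if g a = a' then distOf p f a else 0 := by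
  simp only [distOf]
  have key : ∀ a : α, (if g a = a' then (∑ ω, if f ω = a then p ω else 0) else 0)
      = ∑ ω, if f ω = a then (if g a = a' then p ω else 0) else 0 := by
    intro a; split <;> simp
  simp_rw [key]
  rw [Finset.sum_comm]
  refine Finset.sum_congr rfl fun ω _ => ?_
  simp [Finset.sum_ite_eq']

lemma distOf_nonneg {p : Ω → ℝ} (hp : ∀ ω, 0 ≤ p ω) {α : Type} [Fintype α] [DecidableEq α]
    (f : Ω → α) (a : α) : 0 ≤ distOf p f a :=
  Finset.sum_nonneg fun ω _ => by split; exacts [hp ω, le_rfl]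

lemma distOf_sum {p : Ω → ℝ} (hp : ∑ ω, p ω = 1) {α : Type} [Fintype α] [DecidableEq α]
    (f : Ω → α) : ∑ a, distOf p f a = 1 := by
  simp only [distOf]
  rw [Finset.sum_comm]
  simp [Finset.sum_ite_eq', hp]

lemma t_rewrite {a b : ℝ} (ha : 0 < a) (hb : 0 < b) :
    a * Real.log a - a * Real.log b - (a - b)
      = a * ((b / a - 1) - Real.log (b / a)) := by
  rw [Real.log_div hb.ne' ha.ne']
  field_simp
  ring

lemma gibbs {ι : Type} [Fintype ι] (a b : ι → ℝ)
    (ha : ∀ i, 0 ≤ a i) (hb : ∀ i, 0 ≤ b i)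
    (hab : ∀ i, 0 < a i → 0 < b i)
    (hsum : ∑ i, a i = ∑ i, b i)
    (hzero : ∑ i, (a i * Real.log (a i) - a i * Real.log (b i)) = 0) :
    ∀ i, a i = b i := by
  set t : ι → ℝ := fun i => a i * Real.log (a i) - a i * Real.log (b i) - (a i - b i) with htdef
  have ht : ∀ i, 0 ≤ t i := by
    intro i
    rcases (ha i).eq_or_lt with h | h
    · simp [t, ← h, hb i]
    · have hbpos := hab i h
      rw [htdef]
      simp only
      rw [t_rewrite h hbpos]
      have hlog : Real.log (b i / a i) ≤ b i / a i - 1 :=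
        Real.log_le_sub_one_of_pos (div_pos hbpos h)
      exact mul_nonneg h.le (by linarith)
  have hts : ∑ i, t i = 0 := by
    simp only [t]
    rw [Finset.sum_sub_distrib, hzero, Finset.sum_sub_distrib, hsum]
    ring
  have hteq : ∀ i, t i = 0 := by
    intro i
    have := (Finset.sum_eq_zero_iff_of_nonneg (fun i _ => ht i)).mp hts
    exact this i (mem_univ i)
  intro i
  rcases (ha i).eq_or_lt with h | h
  · have := hteq i
    simp [t, ← h] at this
    simp [← h, this]
  · have hbpos := hab i h
    by_contra hne
    have hx : b i / a i ≠ 1 := by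
      intro hx1
      exact hne (by field_simp at hx1; linarith)
    have hlt := Real.log_lt_sub_one_of_pos (div_pos hbpos h) hx
    have h0 : 0 < t i := by
      rw [htdef]; simp only; rw [t_rewrite h hbpos]
      exact mul_pos h (by linarith)
    have := hteq i
    linarith

variable {α β γ : Type} [Fintype α] [DecidableEq α] [Fintype β] [DecidableEq β]
  [Fintype γ] [DecidableEq γ]

noncomputable def mXY (r : α × β × γ → ℝ) (i : α) (j : β) : ℝ := ∑ k, r (i, j, k)
noncomputable def mYZ (r : α × β × γ → ℝ) (j : β) (k : γ) : ℝ := ∑ i, r (i, j, k)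
noncomputable def mXZ (r : α × β × γ → ℝ) (i : α) (k : γ) : ℝ := ∑ j, r (i, j, k)
noncomputable def mX (r : α × β × γ → ℝ) (i : α) : ℝ := ∑ j, mXY r i j
noncomputable def mY (r : α × β × γ → ℝ) (j : β) : ℝ := ∑ i, mXY r i j
noncomputable def mZ (r : α × β × γ → ℝ) (k : γ) : ℝ := ∑ i, mXZ r i k

variable {r : α × β × γ → ℝ}

lemma mXY_nonneg (hr : ∀ a, 0 ≤ r a) (i : α) (j : β) : 0 ≤ mXY r i j :=
  Finset.sum_nonneg fun _ _ => hr _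
lemma mYZ_nonneg (hr : ∀ a, 0 ≤ r a) (j : β) (k : γ) : 0 ≤ mYZ r j k :=
  Finset.sum_nonneg fun _ _ => hr _
lemma mXZ_nonneg (hr : ∀ a, 0 ≤ r a) (i : α) (k : γ) : 0 ≤ mXZ r i k :=
  Finset.sum_nonneg fun _ _ => hr _
lemma mX_nonneg (hr : ∀ a, 0 ≤ r a) (i : α) : 0 ≤ mX r i :=
  Finset.sum_nonneg fun _ _ => mXY_nonneg hr _ _
lemma mY_nonneg (hr : ∀ a, 0 ≤ r a) (j : β) : 0 ≤ mY r j :=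
  Finset.sum_nonneg fun _ _ => mXY_nonneg hr _ _
lemma mZ_nonneg (hr : ∀ a, 0 ≤ r a) (k : γ) : 0 ≤ mZ r k :=
  Finset.sum_nonneg fun _ _ => mXZ_nonneg hr _ _

lemma le_mXY (hr : ∀ a, 0 ≤ r a) (i : α) (j : β) (k : γ) : r (i,j,k) ≤ mXY r i j :=
  Finset.single_le_sum (f := fun k' => r (i,j,k')) (fun _ _ => hr _) (mem_univ k)
lemma le_mYZ (hr : ∀ a, 0 ≤ r a) (i : α) (j : β) (k : γ) : r (i,j,k) ≤ mYZ r j k :=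
  Finset.single_le_sum (f := fun i' => r (i',j,k)) (fun _ _ => hr _) (mem_univ i)
lemma le_mXZ (hr : ∀ a, 0 ≤ r a) (i : α) (j : β) (k : γ) : r (i,j,k) ≤ mXZ r i k :=
  Finset.single_le_sum (f := fun j' => r (i,j',k)) (fun _ _ => hr _) (mem_univ j)

lemma mY_eq_sum_mYZ (r : α × β × γ → ℝ) (j : β) : mY r j = ∑ k, mYZ r j k := by
  simp only [mY, mXY, mYZ]; exact Finset.sum_comm
lemma mX_eq_sum_mXZ (r : α × β × γ → ℝ) (i : α) : mX r i = ∑ k, mXZ r i k := by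
  simp only [mX, mXY, mXZ]; exact Finset.sum_comm

lemma sum_mXY (hr1 : ∑ a, r a = 1) : ∑ i, ∑ j, mXY r i j = 1 := by
  simp only [mXY]
  rw [← hr1, Fintype.sum_prod_type]
  exact Finset.sum_congr rfl fun i _ => by rw [Fintype.sum_prod_type]
lemma sum_mX (hr1 : ∑ a, r a = 1) : ∑ i, mX r i = 1 := sum_mXY hr1
lemma sum_mY (hr1 : ∑ a, r a = 1) : ∑ j, mY r j = 1 := by
  rw [← sum_mXY hr1]; exact Finset.sum_comm
lemma sum_mZ (hr1 : ∑ a, r a = 1) : ∑ k, mZ r k = 1 := by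
  simp only [mZ, mXZ]
  rw [← sum_mXY hr1]
  simp only [mXY]
  rw [Finset.sum_comm]
  refine Finset.sum_congr rfl fun i _ => Finset.sum_comm
lemma sum_mYZ (hr1 : ∑ a, r a = 1) : ∑ j, ∑ k, mYZ r j k = 1 := by
  rw [← sum_mY hr1]
  exact Finset.sum_congr rfl fun j _ => (mY_eq_sum_mYZ r j).symm
lemma sum_mXZ (hr1 : ∑ a, r a = 1) : ∑ i, ∑ k, mXZ r i k = 1 := by
  rw [← sum_mX hr1]
  exact Finset.sum_congr rfl fun i _ => (mX_eq_sum_mXZ r i).symm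

/-- entropy of an independent product splits. -/
lemma inner_prod {κ : Type} [Fintype κ] (x : ℝ) (g : κ → ℝ) (hg : ∑ k, g k = 1) :
    ∑ k, Real.negMulLog (x * g k)
      = Real.negMulLog x + x * ∑ k, Real.negMulLog (g k) := by
  simp_rw [Real.negMulLog_mul]
  rw [Finset.sum_add_distrib, ← Finset.sum_mul, hg, one_mul, ← Finset.mul_sum]

lemma sum_negMulLog_prod {ι κ : Type} [Fintype ι] [Fintype κ] (f : ι → ℝ) (g : κ → ℝ)
    (hf : ∑ i, f i = 1) (hg : ∑ k, g k = 1) :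
    ∑ i, ∑ k, Real.negMulLog (f i * g k)
      = ∑ i, Real.negMulLog (f i) + ∑ k, Real.negMulLog (g k) := by
  simp_rw [inner_prod _ g hg]
  rw [Finset.sum_add_distrib, ← Finset.sum_mul, hf, one_mul]


lemma negMulLog_sum {κ : Type} [Fintype κ] (f : κ → ℝ) :
    Real.negMulLog (∑ k, f k) = ∑ k, -(f k * Real.log (∑ k', f k')) := by
  rw [Real.negMulLog, neg_mul, Finset.sum_mul, ← Finset.sum_neg_distrib]

lemma sum3_negMulLog_prod {A B C : Type} [Fintype A] [Fintype B] [Fintype C]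
    (f : A → B → ℝ) (g : C → ℝ) (hf : ∑ a, ∑ b, f a b = 1) (hg : ∑ c, g c = 1) :
    ∑ a, ∑ b, ∑ c, Real.negMulLog (f a b * g c)
      = (∑ a, ∑ b, Real.negMulLog (f a b)) + ∑ c, Real.negMulLog (g c) := by
  simp_rw [inner_prod _ g hg]
  have h2 : ∑ a, ∑ b, f a b * (∑ c, Real.negMulLog (g c))
      = (∑ a, ∑ b, f a b) * (∑ c, Real.negMulLog (g c)) := by
    rw [Finset.sum_mul]
    exact Finset.sum_congr rfl fun a _ => by rw [Finset.sum_mul]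
  simp only [Finset.sum_add_distrib]
  rw [h2, hf, one_mul]

end Stmt14Aux

section MainProof

open Stmt14Aux

/-- If every value of `X` and of `Y` has positive probability, the block
graph of the joint distribution of `(X,Y)` is connected, and
`I(X;Z|Y) = I(Y;Z|X) = 0`, then `Z` is independent of `(X,Y)` and
`I(X;Y|Z) = I(X;Y)`. -/
theorem stmt14 {Ω α β γ : Type} [Fintype Ω]
    [Fintype α] [DecidableEq α] [Fintype β] [DecidableEq β]
    [Fintype γ] [DecidableEq γ]
    (p : Ω → ℝ) (hp : IsPmf p) (X : Ω → α) (Y : Ω → β) (Z : Ω → γ)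
    (hX : ∀ i, 0 < distOf p X i) (hY : ∀ j, 0 < distOf p Y j)
    (hconn : ∀ u v : α × β, 0 < distOf p (fun ω => (X ω, Y ω)) u →
      0 < distOf p (fun ω => (X ω, Y ω)) v →
      Relation.ReflTransGen (blockStep (distOf p (fun ω => (X ω, Y ω)))) u v)
    (h1 : cmi p X Z Y = 0) (h2 : cmi p Y Z X = 0) :
    mi p (fun ω => (X ω, Y ω)) Z = 0 ∧ cmi p X Y Z = mi p X Y := by
  classical
  obtain ⟨hp0, hp1⟩ := hp
  set r : α × β × γ → ℝ := distOf p (fun ω => (X ω, Y ω, Z ω)) with hrdef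
  have hr0 : ∀ a, 0 ≤ r a := fun a => Stmt14Aux.distOf_nonneg hp0 _ a
  have hr1 : ∑ a, r a = 1 := Stmt14Aux.distOf_sum hp1 _
  -- marginal translations
  have hdXY : ∀ i j, distOf p (fun ω => (X ω, Y ω)) (i, j) = mXY r i j := by
    intro i j
    refine Eq.trans (distOf_comp p (fun ω => (X ω, Y ω, Z ω)) (fun a => (a.1, a.2.1)) (i,j)) ?_
    simp only [Fintype.sum_prod_type, Prod.ext_iff, ite_and]
    dsimp +instances only
    simp only [Finset.sum_ite_irrel, Finset.sum_const_zero, Finset.sum_ite_eq', Finset.mem_univ,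
      if_true, hrdef, Stmt14Aux.mXY]
  have hdZY : ∀ k j, distOf p (fun ω => (Z ω, Y ω)) (k, j) = mYZ r j k := by
    intro k j
    refine Eq.trans (distOf_comp p (fun ω => (X ω, Y ω, Z ω)) (fun a => (a.2.2, a.2.1)) (k,j)) ?_
    simp only [Fintype.sum_prod_type, Prod.ext_iff, ite_and]
    dsimp +instances only
    simp only [Finset.sum_ite_irrel, Finset.sum_const_zero, Finset.sum_ite_eq', Finset.mem_univ,
      if_true, hrdef, Stmt14Aux.mYZ]
  have hdY : ∀ j, distOf p Y j = mY r j := by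
    intro j
    refine Eq.trans (distOf_comp p (fun ω => (X ω, Y ω, Z ω)) (fun a => a.2.1) j) ?_
    simp only [Fintype.sum_prod_type, Prod.ext_iff, ite_and]
    dsimp +instances only
    simp only [Finset.sum_ite_irrel, Finset.sum_const_zero, Finset.sum_ite_eq', Finset.mem_univ,
      if_true, hrdef, Stmt14Aux.mY, Stmt14Aux.mXY]
  have hdX : ∀ i, distOf p X i = mX r i := by
    intro i
    refine Eq.trans (distOf_comp p (fun ω => (X ω, Y ω, Z ω)) (fun a => a.1) i) ?_
    simp only [Fintype.sum_prod_type, Prod.ext_iff, ite_and]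
    dsimp +instances only
    simp only [Finset.sum_ite_irrel, Finset.sum_const_zero, Finset.sum_ite_eq', Finset.mem_univ,
      if_true, hrdef, Stmt14Aux.mX, Stmt14Aux.mXY]
  have hdZ : ∀ k, distOf p Z k = mZ r k := by
    intro k
    refine Eq.trans (distOf_comp p (fun ω => (X ω, Y ω, Z ω)) (fun a => a.2.2) k) ?_
    simp only [Fintype.sum_prod_type, Prod.ext_iff, ite_and]
    dsimp +instances only
    simp only [Finset.sum_ite_irrel, Finset.sum_const_zero, Finset.sum_ite_eq', Finset.mem_univ,
      if_true, hrdef, Stmt14Aux.mZ, Stmt14Aux.mXZ]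
  have hdYX : ∀ j i, distOf p (fun ω => (Y ω, X ω)) (j, i) = mXY r i j := by
    intro j i
    refine Eq.trans (distOf_comp p (fun ω => (X ω, Y ω, Z ω)) (fun a => (a.2.1, a.1)) (j,i)) ?_
    simp only [Fintype.sum_prod_type, Prod.ext_iff, ite_and]
    dsimp +instances only
    simp only [Finset.sum_ite_irrel, Finset.sum_const_zero, Finset.sum_ite_eq', Finset.mem_univ,
      if_true, hrdef, Stmt14Aux.mXY]
  have hdZX : ∀ k i, distOf p (fun ω => (Z ω, X ω)) (k, i) = mXZ r i k := by
    intro k i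
    refine Eq.trans (distOf_comp p (fun ω => (X ω, Y ω, Z ω)) (fun a => (a.2.2, a.1)) (k,i)) ?_
    simp only [Fintype.sum_prod_type, Prod.ext_iff, ite_and]
    dsimp +instances only
    simp only [Finset.sum_ite_irrel, Finset.sum_const_zero, Finset.sum_ite_eq', Finset.mem_univ,
      if_true, hrdef, Stmt14Aux.mXZ]
  have hdXZ : ∀ i k, distOf p (fun ω => (X ω, Z ω)) (i, k) = mXZ r i k := by
    intro i k
    refine Eq.trans (distOf_comp p (fun ω => (X ω, Y ω, Z ω)) (fun a => (a.1, a.2.2)) (i,k)) ?_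
    simp only [Fintype.sum_prod_type, Prod.ext_iff, ite_and]
    dsimp +instances only
    simp only [Finset.sum_ite_irrel, Finset.sum_const_zero, Finset.sum_ite_eq', Finset.mem_univ,
      if_true, hrdef, Stmt14Aux.mXZ]
  have hdYZ : ∀ j k, distOf p (fun ω => (Y ω, Z ω)) (j, k) = mYZ r j k := by
    intro j k
    refine Eq.trans (distOf_comp p (fun ω => (X ω, Y ω, Z ω)) (fun a => (a.2.1, a.2.2)) (j,k)) ?_
    simp only [Fintype.sum_prod_type, Prod.ext_iff, ite_and]
    dsimp +instances only
    simp only [Finset.sum_ite_irrel, Finset.sum_const_zero, Finset.sum_ite_eq', Finset.mem_univ,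
      if_true, hrdef, Stmt14Aux.mYZ]
  have hdXZY : ∀ i k j, distOf p (fun ω => (X ω, Z ω, Y ω)) (i, k, j) = r (i, j, k) := by
    intro i k j
    refine Eq.trans (distOf_comp p (fun ω => (X ω, Y ω, Z ω)) (fun a => (a.1, a.2.2, a.2.1)) (i,k,j)) ?_
    simp only [Fintype.sum_prod_type, Prod.ext_iff, ite_and]
    dsimp +instances only
    simp only [Finset.sum_ite_irrel, Finset.sum_const_zero, Finset.sum_ite_eq', Finset.mem_univ,
      if_true, hrdef]
  have hdYZX : ∀ j k i, distOf p (fun ω => (Y ω, Z ω, X ω)) (j, k, i) = r (i, j, k) := by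
    intro j k i
    refine Eq.trans (distOf_comp p (fun ω => (X ω, Y ω, Z ω)) (fun a => (a.2.1, a.2.2, a.1)) (j,k,i)) ?_
    simp only [Fintype.sum_prod_type, Prod.ext_iff, ite_and]
    dsimp +instances only
    simp only [Finset.sum_ite_irrel, Finset.sum_const_zero, Finset.sum_ite_eq', Finset.mem_univ,
      if_true, hrdef]
  have hdP : ∀ (i : α) (j : β) (k : γ),
      distOf p (fun ω => ((X ω, Y ω), Z ω)) ((i, j), k) = r (i, j, k) := by
    intro i j k
    refine Eq.trans (distOf_comp p (fun ω => (X ω, Y ω, Z ω)) (fun a => ((a.1, a.2.1), a.2.2)) ((i,j),k)) ?_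
    simp only [Fintype.sum_prod_type, Prod.ext_iff, ite_and]
    dsimp +instances only
    simp only [Finset.sum_ite_irrel, Finset.sum_const_zero, Finset.sum_ite_eq', Finset.mem_univ,
      if_true, hrdef]
  -- entropy translations
  have entXY : ent p (fun ω => (X ω, Y ω)) = ∑ i, ∑ j, negMulLog (mXY r i j) := by
    show ∑ u : α × β, negMulLog (distOf p (fun ω => (X ω, Y ω)) u) = _
    rw [Fintype.sum_prod_type]
    exact Finset.sum_congr rfl fun i _ => Finset.sum_congr rfl fun j _ =>
      congrArg Real.negMulLog (hdXY i j)
  have entZY : ent p (fun ω => (Z ω, Y ω)) = ∑ j, ∑ k, negMulLog (mYZ r j k) := by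
    show ∑ u : γ × β, negMulLog (distOf p (fun ω => (Z ω, Y ω)) u) = _
    rw [Fintype.sum_prod_type, Finset.sum_comm]
    exact Finset.sum_congr rfl fun j _ => Finset.sum_congr rfl fun k _ =>
      congrArg Real.negMulLog (hdZY k j)
  have entY : ent p Y = ∑ j, negMulLog (mY r j) := by
    show ∑ j, negMulLog (distOf p Y j) = _
    exact Finset.sum_congr rfl fun j _ => congrArg Real.negMulLog (hdY j)
  have entX : ent p X = ∑ i, negMulLog (mX r i) := by
    show ∑ i, negMulLog (distOf p X i) = _
    exact Finset.sum_congr rfl fun i _ => congrArg Real.negMulLog (hdX i)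
  have entZ : ent p Z = ∑ k, negMulLog (mZ r k) := by
    show ∑ k, negMulLog (distOf p Z k) = _
    exact Finset.sum_congr rfl fun k _ => congrArg Real.negMulLog (hdZ k)
  have entYX : ent p (fun ω => (Y ω, X ω)) = ∑ i, ∑ j, negMulLog (mXY r i j) := by
    show ∑ u : β × α, negMulLog (distOf p (fun ω => (Y ω, X ω)) u) = _
    rw [Fintype.sum_prod_type, Finset.sum_comm]
    exact Finset.sum_congr rfl fun i _ => Finset.sum_congr rfl fun j _ =>
      congrArg Real.negMulLog (hdYX j i)
  have entZX : ent p (fun ω => (Z ω, X ω)) = ∑ i, ∑ k, negMulLog (mXZ r i k) := by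
    show ∑ u : γ × α, negMulLog (distOf p (fun ω => (Z ω, X ω)) u) = _
    rw [Fintype.sum_prod_type, Finset.sum_comm]
    exact Finset.sum_congr rfl fun i _ => Finset.sum_congr rfl fun k _ =>
      congrArg Real.negMulLog (hdZX k i)
  have entXZ : ent p (fun ω => (X ω, Z ω)) = ∑ i, ∑ k, negMulLog (mXZ r i k) := by
    show ∑ u : α × γ, negMulLog (distOf p (fun ω => (X ω, Z ω)) u) = _
    rw [Fintype.sum_prod_type]
    exact Finset.sum_congr rfl fun i _ => Finset.sum_congr rfl fun k _ =>
      congrArg Real.negMulLog (hdXZ i k)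
  have entYZ : ent p (fun ω => (Y ω, Z ω)) = ∑ j, ∑ k, negMulLog (mYZ r j k) := by
    show ∑ u : β × γ, negMulLog (distOf p (fun ω => (Y ω, Z ω)) u) = _
    rw [Fintype.sum_prod_type]
    exact Finset.sum_congr rfl fun j _ => Finset.sum_congr rfl fun k _ =>
      congrArg Real.negMulLog (hdYZ j k)
  have entXZY : ent p (fun ω => (X ω, Z ω, Y ω)) = ∑ i, ∑ j, ∑ k, negMulLog (r (i, j, k)) := by
    show ∑ u : α × γ × β, negMulLog (distOf p (fun ω => (X ω, Z ω, Y ω)) u) = _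
    rw [Fintype.sum_prod_type]
    refine Finset.sum_congr rfl fun i _ => ?_
    rw [Fintype.sum_prod_type, Finset.sum_comm]
    exact Finset.sum_congr rfl fun j _ => Finset.sum_congr rfl fun k _ =>
      congrArg Real.negMulLog (hdXZY i k j)
  have entYZX : ent p (fun ω => (Y ω, Z ω, X ω)) = ∑ i, ∑ j, ∑ k, negMulLog (r (i, j, k)) := by
    show ∑ u : β × γ × α, negMulLog (distOf p (fun ω => (Y ω, Z ω, X ω)) u) = _
    rw [Fintype.sum_prod_type]
    have inner : ∀ j, (∑ u : γ × α, negMulLog (distOf p (fun ω => (Y ω, Z ω, X ω)) (j, u)))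
        = ∑ i, ∑ k, negMulLog (r (i, j, k)) := by
      intro j
      rw [Fintype.sum_prod_type, Finset.sum_comm]
      exact Finset.sum_congr rfl fun i _ => Finset.sum_congr rfl fun k _ =>
        congrArg Real.negMulLog (hdYZX j k i)
    calc ∑ j, (∑ u : γ × α, negMulLog (distOf p (fun ω => (Y ω, Z ω, X ω)) (j, u)))
        = ∑ j, ∑ i, ∑ k, negMulLog (r (i, j, k)) := Finset.sum_congr rfl fun j _ => inner j
      _ = ∑ i, ∑ j, ∑ k, negMulLog (r (i, j, k)) := Finset.sum_comm
  have entXYZ : ent p (fun ω => (X ω, Y ω, Z ω)) = ∑ i, ∑ j, ∑ k, negMulLog (r (i, j, k)) := by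
    show ∑ u : α × β × γ, negMulLog (r u) = _
    rw [Fintype.sum_prod_type]
    exact Finset.sum_congr rfl fun i _ => by rw [Fintype.sum_prod_type]
  have entP : ent p (fun ω => ((X ω, Y ω), Z ω)) = ∑ i, ∑ j, ∑ k, negMulLog (r (i, j, k)) := by
    show ∑ u : (α × β) × γ, negMulLog (distOf p (fun ω => ((X ω, Y ω), Z ω)) u) = _
    rw [Fintype.sum_prod_type]
    rw [Fintype.sum_prod_type]
    exact Finset.sum_congr rfl fun i _ => Finset.sum_congr rfl fun j _ =>
      Finset.sum_congr rfl fun k _ => congrArg Real.negMulLog (hdP i j k)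
  -- positivity of marginals
  have hmY : ∀ j, 0 < mY r j := fun j => by rw [← hdY j]; exact hY j
  have hmX : ∀ i, 0 < mX r i := fun i => by rw [← hdX i]; exact hX i
  -- expansions of entropies into full triple sums
  have ea : ∑ i, ∑ j, negMulLog (mXY r i j)
      = ∑ i, ∑ j, ∑ k, -(r (i, j, k) * Real.log (mXY r i j)) :=
    Finset.sum_congr rfl fun i _ => Finset.sum_congr rfl fun j _ =>
      negMulLog_sum (fun k => r (i, j, k))
  have eb : ∑ j, ∑ k, negMulLog (mYZ r j k)
      = ∑ i, ∑ j, ∑ k, -(r (i, j, k) * Real.log (mYZ r j k)) := by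
    calc ∑ j, ∑ k, negMulLog (mYZ r j k)
        = ∑ j, ∑ k, ∑ i, -(r (i, j, k) * Real.log (mYZ r j k)) :=
          Finset.sum_congr rfl fun j _ => Finset.sum_congr rfl fun k _ =>
            negMulLog_sum (fun i => r (i, j, k))
      _ = ∑ j, ∑ i, ∑ k, -(r (i, j, k) * Real.log (mYZ r j k)) :=
          Finset.sum_congr rfl fun j _ => Finset.sum_comm
      _ = ∑ i, ∑ j, ∑ k, -(r (i, j, k) * Real.log (mYZ r j k)) := Finset.sum_comm
  have eb2 : ∑ i, ∑ k, negMulLog (mXZ r i k)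
      = ∑ i, ∑ j, ∑ k, -(r (i, j, k) * Real.log (mXZ r i k)) := by
    refine Finset.sum_congr rfl fun i _ => ?_
    calc ∑ k, negMulLog (mXZ r i k)
        = ∑ k, ∑ j, -(r (i, j, k) * Real.log (mXZ r i k)) :=
          Finset.sum_congr rfl fun k _ => negMulLog_sum (fun j => r (i, j, k))
      _ = ∑ j, ∑ k, -(r (i, j, k) * Real.log (mXZ r i k)) := Finset.sum_comm
  have ec : ∑ i, ∑ j, ∑ k, negMulLog (r (i, j, k))
      = ∑ i, ∑ j, ∑ k, -(r (i, j, k) * Real.log (r (i, j, k))) :=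
    Finset.sum_congr rfl fun i _ => Finset.sum_congr rfl fun j _ =>
      Finset.sum_congr rfl fun k _ => by rw [Real.negMulLog, neg_mul]
  have ed : ∑ j, negMulLog (mY r j)
      = ∑ i, ∑ j, ∑ k, -(r (i, j, k) * Real.log (mY r j)) := by
    have e1 : ∀ j, negMulLog (mY r j) = ∑ i, ∑ k, -(r (i, j, k) * Real.log (mY r j)) := by
      intro j
      rw [show Real.negMulLog (mY r j)
          = ∑ i, -(Stmt14Aux.mXY r i j * Real.log (mY r j)) from
        negMulLog_sum (fun i => Stmt14Aux.mXY r i j)]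
      refine Finset.sum_congr rfl fun i _ => ?_
      rw [show Stmt14Aux.mXY r i j * Real.log (mY r j)
          = ∑ k, r (i, j, k) * Real.log (mY r j) from
        Finset.sum_mul Finset.univ (fun k => r (i, j, k)) (Real.log (mY r j))]
      exact (Finset.sum_neg_distrib _).symm
    calc ∑ j, negMulLog (mY r j)
        = ∑ j, ∑ i, ∑ k, -(r (i, j, k) * Real.log (mY r j)) :=
          Finset.sum_congr rfl fun j _ => e1 j
      _ = ∑ i, ∑ j, ∑ k, -(r (i, j, k) * Real.log (mY r j)) := Finset.sum_comm
  have ed2 : ∑ i, negMulLog (mX r i)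
      = ∑ i, ∑ j, ∑ k, -(r (i, j, k) * Real.log (mX r i)) := by
    refine Finset.sum_congr rfl fun i _ => ?_
    rw [show Real.negMulLog (mX r i)
        = ∑ j, -(Stmt14Aux.mXY r i j * Real.log (mX r i)) from
      negMulLog_sum (fun j => Stmt14Aux.mXY r i j)]
    refine Finset.sum_congr rfl fun j _ => ?_
    rw [show Stmt14Aux.mXY r i j * Real.log (mX r i)
        = ∑ k, r (i, j, k) * Real.log (mX r i) from
      Finset.sum_mul Finset.univ (fun k => r (i, j, k)) (Real.log (mX r i))]
    exact (Finset.sum_neg_distrib _).symm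
  -- Gibbs inequality applications
  set B1 : α × β × γ → ℝ :=
    fun a => mXY r a.1 a.2.1 * mYZ r a.2.1 a.2.2 / mY r a.2.1 with hB1def
  set B2 : α × β × γ → ℝ :=
    fun a => mXY r a.1 a.2.1 * mXZ r a.1 a.2.2 / mX r a.1 with hB2def
  have hB1eval : ∀ i j k, B1 (i, j, k) = mXY r i j * mYZ r j k / mY r j := fun i j k => rfl
  have hB2eval : ∀ i j k, B2 (i, j, k) = mXY r i j * mXZ r i k / mX r i := fun i j k => rfl
  have term1 : ∀ i j k, (-(r (i, j, k) * Real.log (mXY r i j)))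
        + (-(r (i, j, k) * Real.log (mYZ r j k)))
        - (-(r (i, j, k) * Real.log (r (i, j, k))))
        - (-(r (i, j, k) * Real.log (mY r j)))
      = r (i, j, k) * Real.log (r (i, j, k)) - r (i, j, k) * Real.log (B1 (i, j, k)) := by
    intro i j k
    rcases (hr0 (i, j, k)).eq_or_lt with h | h
    · rw [← h]; ring
    · have hxy := lt_of_lt_of_le h (le_mXY hr0 i j k)
      have hyz := lt_of_lt_of_le h (le_mYZ hr0 i j k)
      have hB : Real.log (B1 (i, j, k))
          = Real.log (mXY r i j) + Real.log (mYZ r j k) - Real.log (mY r j) := by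
        rw [hB1eval, Real.log_div (mul_pos hxy hyz).ne' (hmY j).ne',
          Real.log_mul hxy.ne' hyz.ne']
      rw [hB]; ring
  have term2 : ∀ i j k, (-(r (i, j, k) * Real.log (mXY r i j)))
        + (-(r (i, j, k) * Real.log (mXZ r i k)))
        - (-(r (i, j, k) * Real.log (r (i, j, k))))
        - (-(r (i, j, k) * Real.log (mX r i)))
      = r (i, j, k) * Real.log (r (i, j, k)) - r (i, j, k) * Real.log (B2 (i, j, k)) := by
    intro i j k
    rcases (hr0 (i, j, k)).eq_or_lt with h | h
    · rw [← h]; ring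
    · have hxy := lt_of_lt_of_le h (le_mXY hr0 i j k)
      have hxz := lt_of_lt_of_le h (le_mXZ hr0 i j k)
      have hB : Real.log (B2 (i, j, k))
          = Real.log (mXY r i j) + Real.log (mXZ r i k) - Real.log (mX r i) := by
        rw [hB2eval, Real.log_div (mul_pos hxy hxz).ne' (hmX i).ne',
          Real.log_mul hxy.ne' hxz.ne']
      rw [hB]; ring
  have sumB1 : ∑ i, ∑ j, ∑ k, B1 (i, j, k) = 1 := by
    have inner : ∀ i j, ∑ k, B1 (i, j, k) = mXY r i j := by
      intro i j
      have h1 : ∑ k, B1 (i, j, k) = mXY r i j * (∑ k, mYZ r j k) / mY r j := by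
        simp only [hB1eval]
        rw [← Finset.sum_div, ← Finset.mul_sum]
      rw [h1, ← mY_eq_sum_mYZ, mul_div_assoc, div_self (hmY j).ne', mul_one]
    calc ∑ i, ∑ j, ∑ k, B1 (i, j, k) = ∑ i, ∑ j, mXY r i j :=
          Finset.sum_congr rfl fun i _ => Finset.sum_congr rfl fun j _ => inner i j
      _ = 1 := sum_mXY hr1
  have sumB2 : ∑ i, ∑ j, ∑ k, B2 (i, j, k) = 1 := by
    have inner : ∀ i j, ∑ k, B2 (i, j, k) = mXY r i j * (∑ k, mXZ r i k) / mX r i := by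
      intro i j
      simp only [hB2eval]
      rw [← Finset.sum_div, ← Finset.mul_sum]
    have inner2 : ∀ i, ∑ j, ∑ k, B2 (i, j, k) = mX r i := by
      intro i
      calc ∑ j, ∑ k, B2 (i, j, k)
          = ∑ j, mXY r i j * (∑ k, mXZ r i k) / mX r i :=
            Finset.sum_congr rfl fun j _ => inner i j
        _ = (∑ j, mXY r i j) * (∑ k, mXZ r i k) / mX r i := by
            rw [← Finset.sum_div, ← Finset.sum_mul]
        _ = mX r i * mX r i / mX r i := by rw [← mX_eq_sum_mXZ]; rfl
        _ = mX r i := by rw [mul_div_assoc, div_self (hmX i).ne', mul_one]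
    calc ∑ i, ∑ j, ∑ k, B2 (i, j, k) = ∑ i, mX r i :=
          Finset.sum_congr rfl fun i _ => inner2 i
      _ = 1 := sum_mX hr1
  have hcmi1 : ∑ i, ∑ j, ∑ k,
      (r (i, j, k) * Real.log (r (i, j, k)) - r (i, j, k) * Real.log (B1 (i, j, k))) = 0 := by
    have hc : cmi p X Z Y = (∑ i, ∑ j, negMulLog (mXY r i j))
        + (∑ j, ∑ k, negMulLog (mYZ r j k))
        - (∑ i, ∑ j, ∑ k, negMulLog (r (i, j, k))) - (∑ j, negMulLog (mY r j)) := by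
      rw [show cmi p X Z Y = ent p (fun ω => (X ω, Y ω)) + ent p (fun ω => (Z ω, Y ω))
          - ent p (fun ω => (X ω, Z ω, Y ω)) - ent p Y from rfl,
        entXY, entZY, entXZY, entY]
    calc ∑ i, ∑ j, ∑ k,
          (r (i, j, k) * Real.log (r (i, j, k)) - r (i, j, k) * Real.log (B1 (i, j, k)))
        = ∑ i, ∑ j, ∑ k, ((-(r (i, j, k) * Real.log (mXY r i j)))
            + (-(r (i, j, k) * Real.log (mYZ r j k)))
            - (-(r (i, j, k) * Real.log (r (i, j, k))))
            - (-(r (i, j, k) * Real.log (mY r j)))) :=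
          Finset.sum_congr rfl fun i _ => Finset.sum_congr rfl fun j _ =>
            Finset.sum_congr rfl fun k _ => (term1 i j k).symm
      _ = (∑ i, ∑ j, ∑ k, -(r (i, j, k) * Real.log (mXY r i j)))
          + (∑ i, ∑ j, ∑ k, -(r (i, j, k) * Real.log (mYZ r j k)))
          - (∑ i, ∑ j, ∑ k, -(r (i, j, k) * Real.log (r (i, j, k))))
          - (∑ i, ∑ j, ∑ k, -(r (i, j, k) * Real.log (mY r j))) := by
          simp only [Finset.sum_add_distrib, Finset.sum_sub_distrib]
      _ = cmi p X Z Y := by rw [hc, ← ea, ← eb, ← ec, ← ed]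
      _ = 0 := h1
  have hcmi2 : ∑ i, ∑ j, ∑ k,
      (r (i, j, k) * Real.log (r (i, j, k)) - r (i, j, k) * Real.log (B2 (i, j, k))) = 0 := by
    have hc : cmi p Y Z X = (∑ i, ∑ j, negMulLog (mXY r i j))
        + (∑ i, ∑ k, negMulLog (mXZ r i k))
        - (∑ i, ∑ j, ∑ k, negMulLog (r (i, j, k))) - (∑ i, negMulLog (mX r i)) := by
      rw [show cmi p Y Z X = ent p (fun ω => (Y ω, X ω)) + ent p (fun ω => (Z ω, X ω))
          - ent p (fun ω => (Y ω, Z ω, X ω)) - ent p X from rfl,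
        entYX, entZX, entYZX, entX]
    calc ∑ i, ∑ j, ∑ k,
          (r (i, j, k) * Real.log (r (i, j, k)) - r (i, j, k) * Real.log (B2 (i, j, k)))
        = ∑ i, ∑ j, ∑ k, ((-(r (i, j, k) * Real.log (mXY r i j)))
            + (-(r (i, j, k) * Real.log (mXZ r i k)))
            - (-(r (i, j, k) * Real.log (r (i, j, k))))
            - (-(r (i, j, k) * Real.log (mX r i)))) :=
          Finset.sum_congr rfl fun i _ => Finset.sum_congr rfl fun j _ =>
            Finset.sum_congr rfl fun k _ => (term2 i j k).symm
      _ = (∑ i, ∑ j, ∑ k, -(r (i, j, k) * Real.log (mXY r i j)))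
          + (∑ i, ∑ j, ∑ k, -(r (i, j, k) * Real.log (mXZ r i k)))
          - (∑ i, ∑ j, ∑ k, -(r (i, j, k) * Real.log (r (i, j, k))))
          - (∑ i, ∑ j, ∑ k, -(r (i, j, k) * Real.log (mX r i))) := by
          simp only [Finset.sum_add_distrib, Finset.sum_sub_distrib]
      _ = cmi p Y Z X := by rw [hc, ← ea, ← eb2, ← ec, ← ed2]
      _ = 0 := h2
  have hfac1 : ∀ i j k, r (i, j, k) = B1 (i, j, k) := by
    have hres := gibbs r B1 hr0
      (fun a => div_nonneg (mul_nonneg (mXY_nonneg hr0 _ _) (mYZ_nonneg hr0 _ _))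
        (mY_nonneg hr0 _))
      (fun a h => div_pos
        (mul_pos (lt_of_lt_of_le h (le_mXY hr0 a.1 a.2.1 a.2.2))
          (lt_of_lt_of_le h (le_mYZ hr0 a.1 a.2.1 a.2.2))) (hmY _))
      (by
        rw [hr1]
        rw [show ∑ a, B1 a = ∑ i, ∑ j, ∑ k, B1 (i, j, k) from by
          rw [Fintype.sum_prod_type]
          exact Finset.sum_congr rfl fun i _ => by rw [Fintype.sum_prod_type]]
        rw [sumB1])
      (by
        rw [show (∑ a, (r a * Real.log (r a) - r a * Real.log (B1 a)))
            = ∑ i, ∑ j, ∑ k, (r (i, j, k) * Real.log (r (i, j, k))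
              - r (i, j, k) * Real.log (B1 (i, j, k))) from by
          rw [Fintype.sum_prod_type]
          exact Finset.sum_congr rfl fun i _ => by rw [Fintype.sum_prod_type]]
        exact hcmi1)
    exact fun i j k => hres (i, j, k)
  have hfac2 : ∀ i j k, r (i, j, k) = B2 (i, j, k) := by
    have hres := gibbs r B2 hr0
      (fun a => div_nonneg (mul_nonneg (mXY_nonneg hr0 _ _) (mXZ_nonneg hr0 _ _))
        (mX_nonneg hr0 _))
      (fun a h => div_pos
        (mul_pos (lt_of_lt_of_le h (le_mXY hr0 a.1 a.2.1 a.2.2))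
          (lt_of_lt_of_le h (le_mXZ hr0 a.1 a.2.1 a.2.2))) (hmX _))
      (by
        rw [hr1]
        rw [show ∑ a, B2 a = ∑ i, ∑ j, ∑ k, B2 (i, j, k) from by
          rw [Fintype.sum_prod_type]
          exact Finset.sum_congr rfl fun i _ => by rw [Fintype.sum_prod_type]]
        rw [sumB2])
      (by
        rw [show (∑ a, (r a * Real.log (r a) - r a * Real.log (B2 a)))
            = ∑ i, ∑ j, ∑ k, (r (i, j, k) * Real.log (r (i, j, k))
              - r (i, j, k) * Real.log (B2 (i, j, k))) from by
          rw [Fintype.sum_prod_type]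
          exact Finset.sum_congr rfl fun i _ => by rw [Fintype.sum_prod_type]]
        exact hcmi2)
    exact fun i j k => hres (i, j, k)
  -- conditional distributions agree along rows and columns
  have hcond : ∀ u : α × β, 0 < mXY r u.1 u.2 →
      ∀ k, mYZ r u.2 k / mY r u.2 = mXZ r u.1 k / mX r u.1 := by
    intro u hu k
    have e1 : r (u.1, u.2, k) = mXY r u.1 u.2 * (mYZ r u.2 k / mY r u.2) := by
      rw [hfac1 u.1 u.2 k, hB1eval, mul_div_assoc]
    have e2 : r (u.1, u.2, k) = mXY r u.1 u.2 * (mXZ r u.1 k / mX r u.1) := by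
      rw [hfac2 u.1 u.2 k, hB2eval, mul_div_assoc]
    exact mul_left_cancel₀ hu.ne' (e1.symm.trans e2)
  have hstep : ∀ u v : α × β, blockStep (distOf p (fun ω => (X ω, Y ω))) u v →
      ∀ k, mYZ r u.2 k / mY r u.2 = mYZ r v.2 k / mY r v.2 := by
    rintro u v ⟨hu, hv, hor⟩ k
    have hu' : 0 < mXY r u.1 u.2 := by rw [← hdXY u.1 u.2]; exact hu
    have hv' : 0 < mXY r v.1 v.2 := by rw [← hdXY v.1 v.2]; exact hv
    rcases hor with h | h
    · rw [hcond u hu' k, hcond v hv' k, h]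
    · rw [h]
  have hchain : ∀ u v : α × β,
      Relation.ReflTransGen (blockStep (distOf p (fun ω => (X ω, Y ω)))) u v →
      ∀ k, mYZ r u.2 k / mY r u.2 = mYZ r v.2 k / mY r v.2 := by
    intro u v h
    induction h with
    | refl => intro k; rfl
    | tail _ hbs ih => intro k; rw [ih k]; exact hstep _ _ hbs k
  have hbase : ∃ u : α × β, 0 < mXY r u.1 u.2 := by
    by_contra hno
    push_neg at hno
    have hs : ∑ u : α × β, mXY r u.1 u.2 = 1 := by
      rw [Fintype.sum_prod_type]; exact sum_mXY hr1
    have hle : ∑ u : α × β, mXY r u.1 u.2 ≤ 0 := Finset.sum_nonpos fun u _ => hno u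
    rw [hs] at hle; linarith
  obtain ⟨u0, hu0⟩ := hbase
  have hrfac : ∀ i j k, r (i, j, k) = mXY r i j * (mYZ r u0.2 k / mY r u0.2) := by
    intro i j k
    rcases (mXY_nonneg hr0 i j).eq_or_lt with h | h
    · have h0 : r (i, j, k) = 0 := le_antisymm (h ▸ le_mXY hr0 i j k) (hr0 _)
      rw [h0, ← h, zero_mul]
    · have hcn := hconn (i, j) u0 (by rw [hdXY i j]; exact h)
        (lt_of_lt_of_eq hu0 (hdXY u0.1 u0.2).symm)
      have heq := hchain (i, j) u0 hcn
      rw [hfac1 i j k, hB1eval, mul_div_assoc]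
      exact congrArg (fun t => mXY r i j * t) (heq k)
  have hmZfac : ∀ k, mZ r k = mYZ r u0.2 k / mY r u0.2 := by
    intro k
    calc mZ r k = ∑ i, ∑ j, r (i, j, k) := rfl
      _ = ∑ i, ∑ j, mXY r i j * (mYZ r u0.2 k / mY r u0.2) :=
          Finset.sum_congr rfl fun i _ => Finset.sum_congr rfl fun j _ => hrfac i j k
      _ = ∑ i, (∑ j, mXY r i j) * (mYZ r u0.2 k / mY r u0.2) :=
          Finset.sum_congr rfl fun i _ =>
            (Finset.sum_mul Finset.univ (fun j => mXY r i j) _).symm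
      _ = (∑ i, ∑ j, mXY r i j) * (mYZ r u0.2 k / mY r u0.2) :=
          (Finset.sum_mul Finset.univ (fun i => ∑ j, mXY r i j) _).symm
      _ = mYZ r u0.2 k / mY r u0.2 := by rw [sum_mXY hr1, one_mul]
  have hrZ : ∀ i j k, r (i, j, k) = mXY r i j * mZ r k := by
    intro i j k
    rw [hmZfac k]
    exact hrfac i j k
  have hXZfac : ∀ i k, mXZ r i k = mX r i * mZ r k := by
    intro i k
    calc mXZ r i k = ∑ j, r (i, j, k) := rfl
      _ = ∑ j, mXY r i j * mZ r k :=
          Finset.sum_congr rfl fun j _ => hrZ i j k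
      _ = (∑ j, mXY r i j) * mZ r k :=
          (Finset.sum_mul Finset.univ (fun j => mXY r i j) _).symm
      _ = mX r i * mZ r k := rfl
  have hYZfac : ∀ j k, mYZ r j k = mY r j * mZ r k := by
    intro j k
    calc mYZ r j k = ∑ i, r (i, j, k) := rfl
      _ = ∑ i, mXY r i j * mZ r k :=
          Finset.sum_congr rfl fun i _ => hrZ i j k
      _ = (∑ i, mXY r i j) * mZ r k :=
          (Finset.sum_mul Finset.univ (fun i => mXY r i j) _).symm
      _ = mY r j * mZ r k := rfl
  -- entropy splitting under independence
  have SXYZ : ∑ i, ∑ j, ∑ k, negMulLog (r (i, j, k))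
      = (∑ i, ∑ j, negMulLog (mXY r i j)) + ∑ k, negMulLog (mZ r k) := by
    calc ∑ i, ∑ j, ∑ k, negMulLog (r (i, j, k))
        = ∑ i, ∑ j, ∑ k, negMulLog (mXY r i j * mZ r k) :=
          Finset.sum_congr rfl fun i _ => Finset.sum_congr rfl fun j _ =>
            Finset.sum_congr rfl fun k _ => by rw [hrZ i j k]
      _ = _ := sum3_negMulLog_prod (fun i j => mXY r i j) (mZ r) (sum_mXY hr1) (sum_mZ hr1)
  have SXZ : ∑ i, ∑ k, negMulLog (mXZ r i k)
      = (∑ i, negMulLog (mX r i)) + ∑ k, negMulLog (mZ r k) := by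
    calc ∑ i, ∑ k, negMulLog (mXZ r i k)
        = ∑ i, ∑ k, negMulLog (mX r i * mZ r k) :=
          Finset.sum_congr rfl fun i _ => Finset.sum_congr rfl fun k _ => by rw [hXZfac i k]
      _ = _ := sum_negMulLog_prod (mX r) (mZ r) (sum_mX hr1) (sum_mZ hr1)
  have SYZ : ∑ j, ∑ k, negMulLog (mYZ r j k)
      = (∑ j, negMulLog (mY r j)) + ∑ k, negMulLog (mZ r k) := by
    calc ∑ j, ∑ k, negMulLog (mYZ r j k)
        = ∑ j, ∑ k, negMulLog (mY r j * mZ r k) :=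
          Finset.sum_congr rfl fun j _ => Finset.sum_congr rfl fun k _ => by rw [hYZfac j k]
      _ = _ := sum_negMulLog_prod (mY r) (mZ r) (sum_mY hr1) (sum_mZ hr1)
  constructor
  · rw [show mi p (fun ω => (X ω, Y ω)) Z = ent p (fun ω => (X ω, Y ω)) + ent p Z
        - ent p (fun ω => ((X ω, Y ω), Z ω)) from rfl,
      entXY, entZ, entP, SXYZ]
    ring
  · rw [show cmi p X Y Z = ent p (fun ω => (X ω, Z ω)) + ent p (fun ω => (Y ω, Z ω))
        - ent p (fun ω => (X ω, Y ω, Z ω)) - ent p Z from rfl,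
      show mi p X Y = ent p X + ent p Y - ent p (fun ω => (X ω, Y ω)) from rfl,
      entXZ, entYZ, entXYZ, entZ, entX, entY, entXY, SXZ, SYZ, SXYZ]
    ring

end MainProof
end

section
/- Let (X,Y) have joint pmf p on {1,…,N}×{1,…,M} with α = p(1,1) > 0, β = p(1,2) > 0, γ = p(2,1) > 0, δ = p(2,2), and suppose either (δ > 0 and αδ < βγ) or δ = 0. For p̄ ∈ (0,1), q = 1 − p̄, define U, V jointly with (X,Y) by: with probability p̄ (independently), U = X and V = Y; with probability q, U = max{2, X} and V = max{2, Y}. Then for all sufficiently small q > 0, the Ingleton expression Ing(U,V,X,Y) = −I(X;Y) + I(X;Y|U) + I(X;Y|V) + I(U;V) is strictly negative. -/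
open Real BigOperators Finset

section Helpers

lemma sum_nml_one {n : ℕ} (k : Fin n) (A : ℝ) :
    ∑ u : Fin n, Real.negMulLog (if u = k then A else 0) = Real.negMulLog A := by
  have hk : k ∈ Finset.univ (α := Fin n) := Finset.mem_univ k
  simp [apply_ite Real.negMulLog, Real.negMulLog_zero, Finset.sum_ite_eq']

lemma sum_nml_two {n : ℕ} (j k : Fin n) (h : j ≠ k) (A B : ℝ) :
    ∑ u : Fin n, Real.negMulLog ((if u = j then A else 0) + (if u = k then B else 0))
      = Real.negMulLog A + Real.negMulLog B := by
  have key : ∀ u : Fin n, Real.negMulLog ((if u = j then A else 0) + (if u = k then B else 0))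
      = (if u = j then Real.negMulLog A else 0) + (if u = k then Real.negMulLog B else 0) := by
    intro u
    rcases eq_or_ne u j with h1 | h1
    · subst h1; simp [h, Real.negMulLog_zero]
    · rcases eq_or_ne u k with h2 | h2
      · subst h2; simp [h1, Real.negMulLog_zero]
      · simp [h1, h2, Real.negMulLog_zero]
  rw [Finset.sum_congr rfl (fun u _ => key u), Finset.sum_add_distrib]
  simp [Finset.sum_ite_eq']

lemma sum_if_const {B : Type} [Fintype B] {c : Prop} [Decidable c] (f : B → ℝ) :
    (∑ y : B, (if c then f y else 0)) = if c then ∑ y, f y else 0 := by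
  split <;> simp

lemma distOf_split {A : Type} [Fintype A] {α : Type} [Fintype α] [DecidableEq α]
    (p : A → ℝ) (q : ℝ) (f : A × Bool → α) (z : α) :
    distOf (fun w : A × Bool => p w.1 * (if w.2 then 1 - q else q)) f z
      = (1 - q) * distOf p (fun xy => f (xy, true)) z
        + q * distOf p (fun xy => f (xy, false)) z := by
  unfold distOf
  rw [Fintype.sum_prod_type]
  simp only [Fintype.sum_bool, if_true, if_false]
  rw [Finset.sum_add_distrib, Finset.mul_sum, Finset.mul_sum]
  congr 1 <;>
    exact Finset.sum_congr rfl (fun x _ => by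
      by_cases hx : f (x, true) = z <;> by_cases hx' : f (x, false) = z <;>
        simp [hx, hx', mul_comm])

lemma ent_split {A : Type} [Fintype A] {α : Type} [Fintype α] [DecidableEq α]
    (p : A → ℝ) (q : ℝ) (f : A × Bool → α) :
    ent (fun w : A × Bool => p w.1 * (if w.2 then 1 - q else q)) f
      = ∑ z : α, Real.negMulLog ((1 - q) * distOf p (fun xy => f (xy, true)) z
          + q * distOf p (fun xy => f (xy, false)) z) := by
  unfold ent
  exact Finset.sum_congr rfl (fun z _ => by rw [distOf_split])

lemma m1_zero {n : ℕ} : max (1 : Fin (n+2)) 0 = 1 := max_eq_left (Fin.zero_le 1)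
lemma m1_one {n : ℕ} : max (1 : Fin (n+2)) 1 = 1 := max_self 1
lemma m1_ss {n : ℕ} (x : Fin n) : max (1 : Fin (n+2)) x.succ.succ = x.succ.succ := by
  apply max_eq_right
  simp [Fin.le_def]
lemma ss_ne_zero {n : ℕ} (x : Fin n) : x.succ.succ ≠ (0 : Fin (n+2)) := Fin.succ_ne_zero _
lemma ss_ne_one {n : ℕ} (x : Fin n) : x.succ.succ ≠ (1 : Fin (n+2)) := by
  simp [Fin.ext_iff]
lemma fin_zero_ne_one' {n : ℕ} : (0 : Fin (n+2)) ≠ 1 := by simp [Fin.ext_iff]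

end Helpers

section Dist
variable {N M : ℕ} (p : Fin (N+2) × Fin (M+2) → ℝ)

lemma D1 (x : Fin (N+2)) : distOf p (fun xy => xy.1) x = ∑ y, p (x, y) := by
  unfold distOf
  rw [Fintype.sum_prod_type, Finset.sum_comm]
  simp [Finset.sum_ite_eq']

lemma D2 (y : Fin (M+2)) : distOf p (fun xy => xy.2) y = ∑ x, p (x, y) := by
  unfold distOf
  rw [Fintype.sum_prod_type]
  simp [Finset.sum_ite_eq']

lemma D3 (z : Fin (N+2) × Fin (M+2)) : distOf p (fun xy => (xy.1, xy.2)) z = p z := by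
  unfold distOf
  simp [Prod.mk.eta, Finset.sum_ite_eq']

lemma D4 (x u : Fin (N+2)) :
    distOf p (fun xy => (xy.1, xy.1)) (x, u) = if u = x then (∑ y, p (x, y)) else 0 := by
  unfold distOf
  rw [Fintype.sum_prod_type, Finset.sum_comm]
  by_cases h : u = x
  · subst h
    simp [Prod.ext_iff, ite_and, Finset.sum_ite_eq']
  · simp only [if_neg h]
    apply Finset.sum_eq_zero; intro y _
    apply Finset.sum_eq_zero; intro x' _
    simp only [Prod.ext_iff]
    exact if_neg (by rintro ⟨h1, h2⟩; subst h1; exact h h2.symm)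

lemma D5 (x u : Fin (N+2)) :
    distOf p (fun xy => (xy.1, max 1 xy.1)) (x, u)
      = if u = max 1 x then (∑ y, p (x, y)) else 0 := by
  unfold distOf
  rw [Fintype.sum_prod_type, Finset.sum_comm]
  by_cases h : u = max 1 x
  · subst h
    simp [Prod.ext_iff, ite_and, Finset.sum_ite_eq']
  · simp only [if_neg h]
    apply Finset.sum_eq_zero; intro y _
    apply Finset.sum_eq_zero; intro x' _
    simp only [Prod.ext_iff]
    exact if_neg (by rintro ⟨h1, h2⟩; subst h1; exact h h2.symm)

lemma D6 (y : Fin (M+2)) (u : Fin (N+2)) :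
    distOf p (fun xy => (xy.2, xy.1)) (y, u) = p (u, y) := by
  unfold distOf
  rw [Fintype.sum_prod_type]
  simp [Prod.ext_iff, ite_and, sum_if_const, Finset.sum_ite_eq']

lemma D4' (y v : Fin (M+2)) :
    distOf p (fun xy => (xy.2, xy.2)) (y, v) = if v = y then (∑ x, p (x, y)) else 0 := by
  unfold distOf
  rw [Fintype.sum_prod_type]
  by_cases h : v = y
  · subst h
    simp [Prod.ext_iff, ite_and, Finset.sum_ite_eq']
  · simp only [if_neg h]
    apply Finset.sum_eq_zero; intro x' _
    apply Finset.sum_eq_zero; intro y' _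
    simp only [Prod.ext_iff]
    exact if_neg (by rintro ⟨h1, h2⟩; subst h1; exact h h2.symm)

lemma D5' (y v : Fin (M+2)) :
    distOf p (fun xy => (xy.2, max 1 xy.2)) (y, v)
      = if v = max 1 y then (∑ x, p (x, y)) else 0 := by
  unfold distOf
  rw [Fintype.sum_prod_type]
  by_cases h : v = max 1 y
  · subst h
    simp [Prod.ext_iff, ite_and, Finset.sum_ite_eq']
  · simp only [if_neg h]
    apply Finset.sum_eq_zero; intro x' _
    apply Finset.sum_eq_zero; intro y' _
    simp only [Prod.ext_iff]
    exact if_neg (by rintro ⟨h1, h2⟩; subst h1; exact h h2.symm)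

lemma D7 (y : Fin (M+2)) (u : Fin (N+2)) :
    distOf p (fun xy => (xy.2, max 1 xy.1)) (y, u)
      = ∑ x, if max 1 x = u then p (x, y) else 0 := by
  unfold distOf
  rw [Fintype.sum_prod_type]
  simp [Prod.ext_iff, ite_and, Finset.sum_ite_eq']

lemma D8 (x : Fin (N+2)) (v : Fin (M+2)) :
    distOf p (fun xy => (xy.1, max 1 xy.2)) (x, v)
      = ∑ y, if max 1 y = v then p (x, y) else 0 := by
  unfold distOf
  rw [Fintype.sum_prod_type, Finset.sum_comm]
  simp [Prod.ext_iff, ite_and, Finset.sum_ite_eq']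

lemma D9 (x u : Fin (N+2)) (y : Fin (M+2)) :
    distOf p (fun xy => (xy.1, xy.2, xy.1)) (x, (y, u))
      = if u = x then p (x, y) else 0 := by
  unfold distOf
  rw [Fintype.sum_prod_type]
  by_cases h : u = x
  · subst h
    simp [Prod.ext_iff, ite_and, Finset.sum_ite_eq', sum_if_const]
  · simp only [if_neg h]
    apply Finset.sum_eq_zero; intro x' _
    apply Finset.sum_eq_zero; intro y' _
    simp only [Prod.ext_iff]
    exact if_neg (by rintro ⟨h1, h2, h3⟩; subst h1; exact h h3.symm)

lemma D10 (x u : Fin (N+2)) (y : Fin (M+2)) :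
    distOf p (fun xy => (xy.1, xy.2, max 1 xy.1)) (x, (y, u))
      = if u = max 1 x then p (x, y) else 0 := by
  unfold distOf
  rw [Fintype.sum_prod_type]
  by_cases h : u = max 1 x
  · subst h
    simp [Prod.ext_iff, ite_and, Finset.sum_ite_eq', sum_if_const]
  · simp only [if_neg h]
    apply Finset.sum_eq_zero; intro x' _
    apply Finset.sum_eq_zero; intro y' _
    simp only [Prod.ext_iff]
    exact if_neg (by rintro ⟨h1, h2, h3⟩; subst h1; exact h h3.symm)

lemma D11 (x : Fin (N+2)) (y v : Fin (M+2)) :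
    distOf p (fun xy => (xy.1, xy.2, xy.2)) (x, (y, v))
      = if v = y then p (x, y) else 0 := by
  unfold distOf
  rw [Fintype.sum_prod_type]
  by_cases h : v = y
  · subst h
    simp [Prod.ext_iff, ite_and, Finset.sum_ite_eq', sum_if_const]
  · simp only [if_neg h]
    apply Finset.sum_eq_zero; intro x' _
    apply Finset.sum_eq_zero; intro y' _
    simp only [Prod.ext_iff]
    exact if_neg (by rintro ⟨h1, h2, h3⟩; subst h2; exact h h3.symm)

lemma D12 (x : Fin (N+2)) (y v : Fin (M+2)) :
    distOf p (fun xy => (xy.1, xy.2, max 1 xy.2)) (x, (y, v))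
      = if v = max 1 y then p (x, y) else 0 := by
  unfold distOf
  rw [Fintype.sum_prod_type]
  by_cases h : v = max 1 y
  · subst h
    simp [Prod.ext_iff, ite_and, Finset.sum_ite_eq', sum_if_const]
  · simp only [if_neg h]
    apply Finset.sum_eq_zero; intro x' _
    apply Finset.sum_eq_zero; intro y' _
    simp only [Prod.ext_iff]
    exact if_neg (by rintro ⟨h1, h2, h3⟩; subst h2; exact h h3.symm)

lemma D13 (u : Fin (N+2)) (v : Fin (M+2)) :
    distOf p (fun xy => (max 1 xy.1, max 1 xy.2)) (u, v)
      = ∑ x, (if max 1 x = u then (∑ y, if max 1 y = v then p (x, y) else 0) else 0) := by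
  unfold distOf
  rw [Fintype.sum_prod_type]
  simp [Prod.ext_iff, ite_and, sum_if_const]

end Dist

section SM

lemma split2 {n : ℕ} (g : Fin (n+2) → ℝ) :
    ∑ x, g x = g 0 + g 1 + ∑ x : Fin n, g x.succ.succ := by
  rw [Fin.sum_univ_succ, Fin.sum_univ_succ, Fin.succ_zero_eq_one]
  ring

lemma m1_ne_zero {n : ℕ} (x : Fin (n+2)) : max 1 x ≠ 0 := by
  intro h
  have h1 : (1 : Fin (n+2)) ≤ max 1 x := le_max_left 1 x
  rw [h] at h1
  simp [Fin.le_def] at h1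

lemma SM0 {n : ℕ} (g : Fin (n+2) → ℝ) :
    ∑ x, (if max 1 x = (0 : Fin (n+2)) then g x else 0) = 0 :=
  Finset.sum_eq_zero fun x _ => if_neg (m1_ne_zero x)

lemma SM1 {n : ℕ} (g : Fin (n+2) → ℝ) :
    ∑ x, (if max 1 x = (1 : Fin (n+2)) then g x else 0) = g 0 + g 1 := by
  rw [split2 (fun x => if max 1 x = (1 : Fin (n+2)) then g x else 0)]
  simp [m1_zero, m1_one, m1_ss, ss_ne_one]

lemma SMss {n : ℕ} (k : Fin n) (g : Fin (n+2) → ℝ) :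
    ∑ x, (if max 1 x = k.succ.succ then g x else 0) = g k.succ.succ := by
  rw [split2 (fun x => if max 1 x = k.succ.succ then g x else 0)]
  simp only [m1_zero, m1_one, m1_ss]
  rw [if_neg (Ne.symm (ss_ne_one k)), if_neg (Ne.symm (ss_ne_one k))]
  have : ∀ x : Fin n, (x.succ.succ = k.succ.succ) ↔ x = k := by
    intro x; simp [Fin.succ_inj]
  simp only [this]
  simp [Finset.sum_ite_eq']

end SM

section Ents
variable {N M : ℕ} (p : Fin (N+2) × Fin (M+2) → ℝ) (q : ℝ)

lemma E1 : ent (fun w : (Fin (N+2) × Fin (M+2)) × Bool => p w.1 * (if w.2 then 1 - q else q))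
      (fun w => w.1.1)
    = Real.negMulLog (∑ y, p (0, y)) + Real.negMulLog (∑ y, p (1, y))
      + ∑ x : Fin N, Real.negMulLog (∑ y, p (x.succ.succ, y)) := by
  rw [ent_split]
  simp only [D1]
  have h : ∀ x : Fin (N+2), (1-q) * (∑ y, p (x,y)) + q * (∑ y, p (x,y)) = (∑ y, p (x,y)) :=
    fun x => by ring
  simp only [h]
  exact split2 _

lemma E2 : ent (fun w : (Fin (N+2) × Fin (M+2)) × Bool => p w.1 * (if w.2 then 1 - q else q))
      (fun w => w.1.2)
    = Real.negMulLog (∑ x, p (x, 0)) + Real.negMulLog (∑ x, p (x, 1))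
      + ∑ y : Fin M, Real.negMulLog (∑ x, p (x, y.succ.succ)) := by
  rw [ent_split]
  simp only [D2]
  have h : ∀ y : Fin (M+2), (1-q) * (∑ x, p (x,y)) + q * (∑ x, p (x,y)) = (∑ x, p (x,y)) :=
    fun y => by ring
  simp only [h]
  exact split2 _

lemma sum_nml_same {n : ℕ} (k : Fin n) (A B : ℝ) :
    ∑ u : Fin n, Real.negMulLog ((if u = k then A else 0) + (if u = k then B else 0))
      = Real.negMulLog (A + B) := by
  have h : ∀ u : Fin n, ((if u = k then A else 0) + (if u = k then B else 0))
      = if u = k then A + B else 0 := fun u => by split <;> simp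
  simp only [h]
  exact sum_nml_one k _

lemma E3 : ent (fun w : (Fin (N+2) × Fin (M+2)) × Bool => p w.1 * (if w.2 then 1 - q else q))
      (fun w => (w.1.1, w.1.2))
    = Real.negMulLog (p (0,0)) + Real.negMulLog (p (0,1))
        + ∑ k : Fin M, Real.negMulLog (p (0, k.succ.succ))
      + (Real.negMulLog (p (1,0)) + Real.negMulLog (p (1,1))
        + ∑ k : Fin M, Real.negMulLog (p (1, k.succ.succ)))
      + (∑ j : Fin N, Real.negMulLog (p (j.succ.succ, 0))
        + ∑ j : Fin N, Real.negMulLog (p (j.succ.succ, 1))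
        + ∑ j : Fin N, ∑ k : Fin M, Real.negMulLog (p (j.succ.succ, k.succ.succ))) := by
  rw [ent_split]
  simp only [D3]
  have h : ∀ z : Fin (N+2) × Fin (M+2), (1-q) * p z + q * p z = p z := fun z => by ring
  simp only [h]
  rw [Fintype.sum_prod_type]
  rw [split2 (fun x => ∑ y, Real.negMulLog (p (x, y)))]
  rw [split2 (fun y => Real.negMulLog (p (0, y)))]
  rw [split2 (fun y => Real.negMulLog (p (1, y)))]
  have h2 : ∀ j : Fin N, (∑ y, Real.negMulLog (p (j.succ.succ, y)))
      = Real.negMulLog (p (j.succ.succ, 0)) + Real.negMulLog (p (j.succ.succ, 1))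
        + ∑ k : Fin M, Real.negMulLog (p (j.succ.succ, k.succ.succ)) :=
    fun j => split2 _
  simp only [h2]
  rw [Finset.sum_add_distrib, Finset.sum_add_distrib]

lemma E6 : ent (fun w : (Fin (N+2) × Fin (M+2)) × Bool => p w.1 * (if w.2 then 1 - q else q))
      (fun w => (w.1.1, if w.2 then w.1.1 else max 1 w.1.1))
    = Real.negMulLog ((1-q) * ∑ y, p (0, y)) + Real.negMulLog (q * ∑ y, p (0, y))
      + Real.negMulLog (∑ y, p (1, y))
      + ∑ j : Fin N, Real.negMulLog (∑ y, p (j.succ.succ, y)) := by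
  rw [ent_split]
  simp only [Bool.false_eq_true, if_true, if_false]
  rw [Fintype.sum_prod_type]
  simp only [D4, D5]
  rw [split2 (fun x => ∑ u, Real.negMulLog ((1-q) * (if u = x then ∑ y, p (x, y) else 0)
      + q * (if u = max 1 x then ∑ y, p (x, y) else 0)))]
  simp only [m1_zero, m1_one, m1_ss, mul_ite, mul_zero]
  rw [sum_nml_two 0 1 fin_zero_ne_one' ((1-q) * ∑ y, p (0, y)) (q * ∑ y, p (0, y))]
  rw [sum_nml_same 1 ((1-q) * ∑ y, p (1, y)) (q * ∑ y, p (1, y))]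
  have hss : ∀ j : Fin N, (∑ u, Real.negMulLog ((if u = j.succ.succ then (1-q) * ∑ y, p (j.succ.succ, y) else 0)
      + (if u = j.succ.succ then q * ∑ y, p (j.succ.succ, y) else 0)))
      = Real.negMulLog (∑ y, p (j.succ.succ, y)) := fun j => by
    rw [sum_nml_same]; congr 1; ring
  simp only [hss]
  have h1 : (1-q) * (∑ y, p (1, y)) + q * (∑ y, p (1, y)) = ∑ y, p (1, y) := by ring
  rw [h1]

lemma E7 : ent (fun w : (Fin (N+2) × Fin (M+2)) × Bool => p w.1 * (if w.2 then 1 - q else q))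
      (fun w => (w.1.2, if w.2 then w.1.2 else max 1 w.1.2))
    = Real.negMulLog ((1-q) * ∑ x, p (x, 0)) + Real.negMulLog (q * ∑ x, p (x, 0))
      + Real.negMulLog (∑ x, p (x, 1))
      + ∑ k : Fin M, Real.negMulLog (∑ x, p (x, k.succ.succ)) := by
  rw [ent_split]
  simp only [Bool.false_eq_true, if_true, if_false]
  rw [Fintype.sum_prod_type]
  simp only [D4', D5']
  rw [split2 (fun y => ∑ v, Real.negMulLog ((1-q) * (if v = y then ∑ x, p (x, y) else 0)
      + q * (if v = max 1 y then ∑ x, p (x, y) else 0)))]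
  simp only [m1_zero, m1_one, m1_ss, mul_ite, mul_zero]
  rw [sum_nml_two 0 1 fin_zero_ne_one' ((1-q) * ∑ x, p (x, 0)) (q * ∑ x, p (x, 0))]
  rw [sum_nml_same 1 ((1-q) * ∑ x, p (x, 1)) (q * ∑ x, p (x, 1))]
  have hss : ∀ k : Fin M, (∑ v, Real.negMulLog ((if v = k.succ.succ then (1-q) * ∑ x, p (x, k.succ.succ) else 0)
      + (if v = k.succ.succ then q * ∑ x, p (x, k.succ.succ) else 0)))
      = Real.negMulLog (∑ x, p (x, k.succ.succ)) := fun k => by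
    rw [sum_nml_same]; congr 1; ring
  simp only [hss]
  have h1 : (1-q) * (∑ x, p (x, 1)) + q * (∑ x, p (x, 1)) = ∑ x, p (x, 1) := by ring
  rw [h1]

lemma E8 : ent (fun w : (Fin (N+2) × Fin (M+2)) × Bool => p w.1 * (if w.2 then 1 - q else q))
      (fun w => (w.1.2, if w.2 then w.1.1 else max 1 w.1.1))
    = Real.negMulLog ((1-q) * p (0,0)) + Real.negMulLog ((1-q) * p (0,1))
        + ∑ k : Fin M, Real.negMulLog ((1-q) * p (0, k.succ.succ))
      + (Real.negMulLog (p (1,0) + q * p (0,0)) + Real.negMulLog (p (1,1) + q * p (0,1))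
        + ∑ k : Fin M, Real.negMulLog (p (1, k.succ.succ) + q * p (0, k.succ.succ)))
      + (∑ j : Fin N, Real.negMulLog (p (j.succ.succ, 0))
        + ∑ j : Fin N, Real.negMulLog (p (j.succ.succ, 1))
        + ∑ j : Fin N, ∑ k : Fin M, Real.negMulLog (p (j.succ.succ, k.succ.succ))) := by
  rw [ent_split]
  simp only [Bool.false_eq_true, if_true, if_false]
  rw [Fintype.sum_prod_type, Finset.sum_comm]
  simp only [D6, D7]
  rw [split2 (fun u => ∑ y, Real.negMulLog ((1-q) * p (u, y)
      + q * ∑ x, if max 1 x = u then p (x, y) else 0))]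
  simp only [SM0, SM1, SMss, mul_zero, add_zero]
  have h0 : ∀ y : Fin (M+2), Real.negMulLog ((1-q) * p (0, y) + q * 0)
      = Real.negMulLog ((1-q) * p (0, y)) := fun y => by rw [mul_zero, add_zero]
  have h1 : ∀ y : Fin (M+2), (1-q) * p (1, y) + q * (p (0, y) + p (1, y))
      = p (1, y) + q * p (0, y) := fun y => by ring
  have hss : ∀ j : Fin N, ∀ y : Fin (M+2), (1-q) * p (j.succ.succ, y) + q * p (j.succ.succ, y)
      = p (j.succ.succ, y) := fun j y => by ring
  simp only [h0, h1, hss]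
  rw [split2 (fun y => Real.negMulLog ((1-q) * p (0, y)))]
  rw [split2 (fun y => Real.negMulLog (p (1, y) + q * p (0, y)))]
  have h2 : ∀ j : Fin N, (∑ y, Real.negMulLog (p (j.succ.succ, y)))
      = Real.negMulLog (p (j.succ.succ, 0)) + Real.negMulLog (p (j.succ.succ, 1))
        + ∑ k : Fin M, Real.negMulLog (p (j.succ.succ, k.succ.succ)) := fun j => split2 _
  simp only [h2]
  rw [Finset.sum_add_distrib, Finset.sum_add_distrib]

lemma E9 : ent (fun w : (Fin (N+2) × Fin (M+2)) × Bool => p w.1 * (if w.2 then 1 - q else q))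
      (fun w => (w.1.1, if w.2 then w.1.2 else max 1 w.1.2))
    = Real.negMulLog ((1-q) * p (0,0)) + Real.negMulLog ((1-q) * p (1,0))
        + ∑ j : Fin N, Real.negMulLog ((1-q) * p (j.succ.succ, 0))
      + (Real.negMulLog (p (0,1) + q * p (0,0)) + Real.negMulLog (p (1,1) + q * p (1,0))
        + ∑ j : Fin N, Real.negMulLog (p (j.succ.succ, 1) + q * p (j.succ.succ, 0)))
      + (∑ k : Fin M, Real.negMulLog (p (0, k.succ.succ))
        + ∑ k : Fin M, Real.negMulLog (p (1, k.succ.succ))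
        + ∑ j : Fin N, ∑ k : Fin M, Real.negMulLog (p (j.succ.succ, k.succ.succ))) := by
  rw [ent_split]
  simp only [Bool.false_eq_true, if_true, if_false]
  rw [Fintype.sum_prod_type]
  simp only [D3, D8]
  have hx : ∀ x : Fin (N+2), (∑ v, Real.negMulLog ((1-q) * p (x, v)
        + q * ∑ y, if max 1 y = v then p (x, y) else 0))
      = Real.negMulLog ((1-q) * p (x, 0)) + Real.negMulLog (p (x, 1) + q * p (x, 0))
        + ∑ k : Fin M, Real.negMulLog (p (x, k.succ.succ)) := by
    intro x
    rw [split2 (fun v => Real.negMulLog ((1-q) * p (x, v)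
        + q * ∑ y, if max 1 y = v then p (x, y) else 0))]
    simp only [SM0, SM1, SMss, mul_zero, add_zero]
    have h1 : (1-q) * p (x, 1) + q * (p (x, 0) + p (x, 1)) = p (x, 1) + q * p (x, 0) := by ring
    have hss : ∀ k : Fin M, (1-q) * p (x, k.succ.succ) + q * p (x, k.succ.succ)
        = p (x, k.succ.succ) := fun k => by ring
    simp only [h1, hss]
  simp only [hx]
  rw [Finset.sum_add_distrib, Finset.sum_add_distrib]
  rw [split2 (fun x => Real.negMulLog ((1-q) * p (x, 0)))]
  rw [split2 (fun x => Real.negMulLog (p (x, 1) + q * p (x, 0)))]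
  rw [split2 (fun x => ∑ k : Fin M, Real.negMulLog (p (x, k.succ.succ)))]

lemma E10 : ent (fun w : (Fin (N+2) × Fin (M+2)) × Bool => p w.1 * (if w.2 then 1 - q else q))
      (fun w => (w.1.1, w.1.2, if w.2 then w.1.1 else max 1 w.1.1))
    = Real.negMulLog ((1-q) * p (0,0)) + Real.negMulLog ((1-q) * p (0,1))
        + ∑ k : Fin M, Real.negMulLog ((1-q) * p (0, k.succ.succ))
      + (Real.negMulLog (q * p (0,0)) + Real.negMulLog (q * p (0,1))
        + ∑ k : Fin M, Real.negMulLog (q * p (0, k.succ.succ)))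
      + (Real.negMulLog (p (1,0)) + Real.negMulLog (p (1,1))
        + ∑ k : Fin M, Real.negMulLog (p (1, k.succ.succ)))
      + (∑ j : Fin N, Real.negMulLog (p (j.succ.succ, 0))
        + ∑ j : Fin N, Real.negMulLog (p (j.succ.succ, 1))
        + ∑ j : Fin N, ∑ k : Fin M, Real.negMulLog (p (j.succ.succ, k.succ.succ))) := by
  rw [ent_split]
  simp only [Bool.false_eq_true, if_true, if_false]
  rw [Fintype.sum_prod_type]
  simp only [Fintype.sum_prod_type]
  simp only [D9, D10]
  rw [split2 (fun x => ∑ y, ∑ u, Real.negMulLog ((1-q) * (if u = x then p (x, y) else 0)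
      + q * (if u = max 1 x then p (x, y) else 0)))]
  simp only [m1_zero, m1_one, m1_ss, mul_ite, mul_zero]
  have h0 : ∀ y : Fin (M+2), (∑ u, Real.negMulLog ((if u = (0 : Fin (N+2)) then (1-q) * p (0, y) else 0)
      + (if u = 1 then q * p (0, y) else 0)))
      = Real.negMulLog ((1-q) * p (0, y)) + Real.negMulLog (q * p (0, y)) :=
    fun y => sum_nml_two 0 1 fin_zero_ne_one' _ _
  have h1 : ∀ y : Fin (M+2), (∑ u, Real.negMulLog ((if u = (1 : Fin (N+2)) then (1-q) * p (1, y) else 0)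
      + (if u = 1 then q * p (1, y) else 0)))
      = Real.negMulLog (p (1, y)) := fun y => by rw [sum_nml_same]; congr 1; ring
  have hss : ∀ j : Fin N, ∀ y : Fin (M+2),
      (∑ u, Real.negMulLog ((if u = j.succ.succ then (1-q) * p (j.succ.succ, y) else 0)
        + (if u = j.succ.succ then q * p (j.succ.succ, y) else 0)))
      = Real.negMulLog (p (j.succ.succ, y)) := fun j y => by rw [sum_nml_same]; congr 1; ring
  simp only [h0, h1, hss]
  rw [Finset.sum_add_distrib]
  rw [split2 (fun y => Real.negMulLog ((1-q) * p (0, y)))]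
  rw [split2 (fun y => Real.negMulLog (q * p (0, y)))]
  rw [split2 (fun y => Real.negMulLog (p (1, y)))]
  have h2 : ∀ j : Fin N, (∑ y, Real.negMulLog (p (j.succ.succ, y)))
      = Real.negMulLog (p (j.succ.succ, 0)) + Real.negMulLog (p (j.succ.succ, 1))
        + ∑ k : Fin M, Real.negMulLog (p (j.succ.succ, k.succ.succ)) := fun j => split2 _
  simp only [h2]
  rw [Finset.sum_add_distrib, Finset.sum_add_distrib]

lemma E11 : ent (fun w : (Fin (N+2) × Fin (M+2)) × Bool => p w.1 * (if w.2 then 1 - q else q))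
      (fun w => (w.1.1, w.1.2, if w.2 then w.1.2 else max 1 w.1.2))
    = Real.negMulLog ((1-q) * p (0,0)) + Real.negMulLog ((1-q) * p (1,0))
        + ∑ j : Fin N, Real.negMulLog ((1-q) * p (j.succ.succ, 0))
      + (Real.negMulLog (q * p (0,0)) + Real.negMulLog (q * p (1,0))
        + ∑ j : Fin N, Real.negMulLog (q * p (j.succ.succ, 0)))
      + (Real.negMulLog (p (0,1)) + Real.negMulLog (p (1,1))
        + ∑ j : Fin N, Real.negMulLog (p (j.succ.succ, 1)))
      + (∑ k : Fin M, Real.negMulLog (p (0, k.succ.succ))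
        + ∑ k : Fin M, Real.negMulLog (p (1, k.succ.succ))
        + ∑ j : Fin N, ∑ k : Fin M, Real.negMulLog (p (j.succ.succ, k.succ.succ))) := by
  rw [ent_split]
  simp only [Bool.false_eq_true, if_true, if_false]
  rw [Fintype.sum_prod_type]
  simp only [Fintype.sum_prod_type]
  simp only [D11, D12]
  have hx : ∀ x : Fin (N+2), (∑ y, ∑ v, Real.negMulLog ((1-q) * (if v = y then p (x, y) else 0)
        + q * (if v = max 1 y then p (x, y) else 0)))
      = Real.negMulLog ((1-q) * p (x, 0)) + Real.negMulLog (q * p (x, 0))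
        + Real.negMulLog (p (x, 1)) + ∑ k : Fin M, Real.negMulLog (p (x, k.succ.succ)) := by
    intro x
    rw [split2 (fun y => ∑ v, Real.negMulLog ((1-q) * (if v = y then p (x, y) else 0)
        + q * (if v = max 1 y then p (x, y) else 0)))]
    simp only [m1_zero, m1_one, m1_ss, mul_ite, mul_zero]
    rw [sum_nml_two 0 1 fin_zero_ne_one' ((1-q) * p (x, 0)) (q * p (x, 0))]
    rw [sum_nml_same 1 ((1-q) * p (x, 1)) (q * p (x, 1))]
    have hss : ∀ k : Fin M, (∑ v, Real.negMulLog ((if v = k.succ.succ then (1-q) * p (x, k.succ.succ) else 0)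
        + (if v = k.succ.succ then q * p (x, k.succ.succ) else 0)))
        = Real.negMulLog (p (x, k.succ.succ)) := fun k => by rw [sum_nml_same]; congr 1; ring
    simp only [hss]
    rw [show (1-q) * p (x, 1) + q * p (x, 1) = p (x, 1) from by ring]
  simp only [hx]
  rw [Finset.sum_add_distrib, Finset.sum_add_distrib, Finset.sum_add_distrib]
  rw [split2 (fun x => Real.negMulLog ((1-q) * p (x, 0)))]
  rw [split2 (fun x => Real.negMulLog (q * p (x, 0)))]
  rw [split2 (fun x => Real.negMulLog (p (x, 1)))]
  rw [split2 (fun x => ∑ k : Fin M, Real.negMulLog (p (x, k.succ.succ)))]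

lemma E12 : ent (fun w : (Fin (N+2) × Fin (M+2)) × Bool => p w.1 * (if w.2 then 1 - q else q))
      (fun w => (if w.2 then w.1.1 else max 1 w.1.1, if w.2 then w.1.2 else max 1 w.1.2))
    = Real.negMulLog ((1-q) * p (0,0)) + Real.negMulLog ((1-q) * p (0,1))
        + ∑ k : Fin M, Real.negMulLog ((1-q) * p (0, k.succ.succ))
      + (Real.negMulLog ((1-q) * p (1,0))
        + Real.negMulLog (p (1,1) + q * (p (0,0) + p (0,1) + p (1,0)))
        + ∑ k : Fin M, Real.negMulLog (p (1, k.succ.succ) + q * p (0, k.succ.succ)))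
      + (∑ j : Fin N, Real.negMulLog ((1-q) * p (j.succ.succ, 0))
        + ∑ j : Fin N, Real.negMulLog (p (j.succ.succ, 1) + q * p (j.succ.succ, 0))
        + ∑ j : Fin N, ∑ k : Fin M, Real.negMulLog (p (j.succ.succ, k.succ.succ))) := by
  rw [ent_split]
  simp only [Bool.false_eq_true, if_true, if_false]
  rw [Fintype.sum_prod_type]
  simp only [D3, D13]
  rw [split2 (fun u => ∑ v, Real.negMulLog ((1-q) * p (u, v)
      + q * ∑ x, if max 1 x = u then (∑ y, if max 1 y = v then p (x, y) else 0) else 0))]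
  simp only [SM0, SM1, SMss, mul_zero, add_zero]
  -- u = 0 piece
  rw [split2 (fun v => Real.negMulLog ((1-q) * p (0, v)))]
  -- u = 1 piece
  rw [split2 (fun v => Real.negMulLog ((1-q) * p (1, v)
      + q * ((∑ y, if max 1 y = v then p (0, y) else 0) + ∑ y, if max 1 y = v then p (1, y) else 0)))]
  simp only [SM0, SM1, SMss, mul_zero, add_zero]
  rw [show (1-q) * p (1, (1 : Fin (M+2))) + q * ((p (0,0) + p (0,1)) + (p (1,0) + p (1,1)))
      = p (1,1) + q * (p (0,0) + p (0,1) + p (1,0)) from by ring]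
  have hk : ∀ k : Fin M, (1-q) * p (1, k.succ.succ) + q * (p (0, k.succ.succ) + p (1, k.succ.succ))
      = p (1, k.succ.succ) + q * p (0, k.succ.succ) := fun k => by ring
  simp only [hk]
  -- u = succ succ piece
  have hj : ∀ j : Fin N, (∑ v, Real.negMulLog ((1-q) * p (j.succ.succ, v)
        + q * ∑ y, if max 1 y = v then p (j.succ.succ, y) else 0))
      = Real.negMulLog ((1-q) * p (j.succ.succ, 0))
        + Real.negMulLog (p (j.succ.succ, 1) + q * p (j.succ.succ, 0))
        + ∑ k : Fin M, Real.negMulLog (p (j.succ.succ, k.succ.succ)) := by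
    intro j
    rw [split2 (fun v => Real.negMulLog ((1-q) * p (j.succ.succ, v)
        + q * ∑ y, if max 1 y = v then p (j.succ.succ, y) else 0))]
    simp only [SM0, SM1, SMss, mul_zero, add_zero]
    rw [show (1-q) * p (j.succ.succ, (1 : Fin (M+2)))
        + q * (p (j.succ.succ, 0) + p (j.succ.succ, 1))
        = p (j.succ.succ, 1) + q * p (j.succ.succ, 0) from by ring]
    have hss : ∀ k : Fin M, (1-q) * p (j.succ.succ, k.succ.succ) + q * p (j.succ.succ, k.succ.succ)
        = p (j.succ.succ, k.succ.succ) := fun k => by ring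
    simp only [hss]
  simp only [hj]
  rw [Finset.sum_add_distrib, Finset.sum_add_distrib]

end Ents

lemma ing_formula {N M : ℕ} (p : Fin (N+2) × Fin (M+2) → ℝ) (q : ℝ) :
    -(mi (fun w : (Fin (N+2) × Fin (M+2)) × Bool => p w.1 * (if w.2 then 1 - q else q))
        (fun w => w.1.1) (fun w => w.1.2))
      + cmi (fun w : (Fin (N+2) × Fin (M+2)) × Bool => p w.1 * (if w.2 then 1 - q else q))
        (fun w => w.1.1) (fun w => w.1.2) (fun w => if w.2 then w.1.1 else max 1 w.1.1)
      + cmi (fun w : (Fin (N+2) × Fin (M+2)) × Bool => p w.1 * (if w.2 then 1 - q else q))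
        (fun w => w.1.1) (fun w => w.1.2) (fun w => if w.2 then w.1.2 else max 1 w.1.2)
      + mi (fun w : (Fin (N+2) × Fin (M+2)) × Bool => p w.1 * (if w.2 then 1 - q else q))
        (fun w => if w.2 then w.1.1 else max 1 w.1.1) (fun w => if w.2 then w.1.2 else max 1 w.1.2)
    = (Real.negMulLog (p (1,0) + q * p (0,0)) - Real.negMulLog (p (1,0)))
      + (Real.negMulLog (p (1,1) + q * p (0,1)) - Real.negMulLog (p (1,1)))
      + (Real.negMulLog (p (0,1) + q * p (0,0)) - Real.negMulLog (p (0,1)))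
      + (Real.negMulLog (p (1,1) + q * p (1,0)) - Real.negMulLog (p (1,1)))
      - (Real.negMulLog (p (1,1) + q * (p (0,0) + p (0,1) + p (1,0))) - Real.negMulLog (p (1,1)))
      + p (0,0) * Real.negMulLog (1-q) - q * Real.negMulLog (p (0,0)) := by
  unfold mi cmi
  simp only []
  rw [E1, E2, E3, E6, E7, E8, E9, E10, E11, E12]
  simp only [Real.negMulLog_mul]
  simp only [Finset.sum_add_distrib, ← Finset.sum_mul, ← Finset.mul_sum]
  rw [split2 (fun y => p (0, y)), split2 (fun x => p (x, 0))]
  ring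

section Analysis
open Filter Topology

lemma hd_nml_affine (c a : ℝ) (hc : c ≠ 0) :
    HasDerivAt (fun q : ℝ => Real.negMulLog (c + q * a)) ((-Real.log c - 1) * a) 0 := by
  have h1 : HasDerivAt (fun q : ℝ => c + q * a) a 0 := by
    simpa using ((hasDerivAt_id (0:ℝ)).mul_const a).const_add c
  have h2 : HasDerivAt Real.negMulLog (-Real.log (c + 0 * a) - 1) (c + 0 * a) :=
    Real.hasDerivAt_negMulLog (by simpa using hc)
  have h3 := h2.comp 0 h1
  simpa [Function.comp_def] using h3

lemma hd_nml_one_sub :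
    HasDerivAt (fun q : ℝ => Real.negMulLog (1 - q)) 1 0 := by
  have h1 : HasDerivAt (fun q : ℝ => 1 - q) (-1) 0 := by
    simpa using ((hasDerivAt_id (0:ℝ)).const_sub 1)
  have h2 : HasDerivAt Real.negMulLog (-Real.log (1 - 0) - 1) (1 - 0) :=
    Real.hasDerivAt_negMulLog (by norm_num)
  have h3 := h2.comp 0 h1
  have : (-Real.log (1 - 0) - 1) * (-1) = 1 := by simp
  rw [this] at h3
  exact h3

lemma slope_tendsto_of_deriv (G : ℝ → ℝ) (L : ℝ) (h : HasDerivAt G L 0) (h0 : G 0 = 0) :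
    Tendsto (fun q => G q / q) (nhdsWithin (0:ℝ) (Set.Ioi 0)) (nhds L) := by
  have h1 := hasDerivAt_iff_tendsto_slope.mp h
  have h2 : Tendsto (slope G 0) (nhdsWithin (0:ℝ) (Set.Ioi 0)) (nhds L) :=
    h1.mono_left (nhdsWithin_mono _ (fun x hx => ne_of_gt hx))
  refine h2.congr (fun q => ?_)
  simp [slope_def_field, h0]

lemma neg_of_div_eventually (G : ℝ → ℝ)
    (h : ∀ᶠ q in nhdsWithin (0:ℝ) (Set.Ioi 0), G q / q < 0) :
    ∃ ε > (0:ℝ), ∀ q, 0 < q → q < ε → G q < 0 := by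
  have h2 : ∀ᶠ q in nhdsWithin (0:ℝ) (Set.Ioi 0), G q < 0 := by
    filter_upwards [h, self_mem_nhdsWithin] with q hq hq0
    have hq0' : 0 < q := hq0
    rcases div_neg_iff.mp hq with ⟨_, h2⟩ | ⟨h1, _⟩
    · linarith
    · exact h1
  rw [eventually_nhdsWithin_iff, Metric.eventually_nhds_iff] at h2
  obtain ⟨ε, hε, H⟩ := h2
  refine ⟨ε, hε, fun q hq hqε => ?_⟩
  exact H (by rw [Real.dist_eq]; rw [sub_zero]; rwa [abs_of_pos hq]) hq

end Analysis

section MainNeg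
open Filter Topology

lemma main_neg {a b c d : ℝ} (ha : 0 < a) (hb : 0 < b) (hc : 0 < c)
    (hd : (0 < d ∧ a * d < b * c) ∨ d = 0) :
    ∃ ε > (0:ℝ), ∀ q : ℝ, 0 < q → q < ε →
      (Real.negMulLog (c + q * a) - Real.negMulLog c)
      + (Real.negMulLog (d + q * b) - Real.negMulLog d)
      + (Real.negMulLog (b + q * a) - Real.negMulLog b)
      + (Real.negMulLog (d + q * c) - Real.negMulLog d)
      - (Real.negMulLog (d + q * (a + b + c)) - Real.negMulLog d)
      + a * Real.negMulLog (1 - q) - q * Real.negMulLog a < 0 := by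
  set G : ℝ → ℝ := fun q =>
      (Real.negMulLog (c + q * a) - Real.negMulLog c)
      + (Real.negMulLog (d + q * b) - Real.negMulLog d)
      + (Real.negMulLog (b + q * a) - Real.negMulLog b)
      + (Real.negMulLog (d + q * c) - Real.negMulLog d)
      - (Real.negMulLog (d + q * (a + b + c)) - Real.negMulLog d)
      + a * Real.negMulLog (1 - q) - q * Real.negMulLog a with hG
  suffices h : ∃ ε > (0:ℝ), ∀ q : ℝ, 0 < q → q < ε → G q < 0 by
    obtain ⟨ε, hε, H⟩ := h
    exact ⟨ε, hε, fun q h1 h2 => H q h1 h2⟩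
  have hq7 : HasDerivAt (fun q : ℝ => q * Real.negMulLog a) (Real.negMulLog a) 0 := by
    simpa using (hasDerivAt_id (0:ℝ)).mul_const (Real.negMulLog a)
  rcases hd with ⟨hd0, hlt⟩ | hd0
  · -- case d > 0
    have H : HasDerivAt G
        (((((-Real.log c - 1) * a + (-Real.log d - 1) * b) + (-Real.log b - 1) * a)
          + (-Real.log d - 1) * c - (-Real.log d - 1) * (a + b + c)) + a * 1
          - Real.negMulLog a) 0 := by
      exact ((((((hd_nml_affine c a hc.ne').sub_const _).add
        ((hd_nml_affine d b hd0.ne').sub_const _)).add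
        ((hd_nml_affine b a hb.ne').sub_const _)).add
        ((hd_nml_affine d c hd0.ne').sub_const _)).sub
        ((hd_nml_affine d (a+b+c) hd0.ne').sub_const _)).add
        (hd_nml_one_sub.const_mul a) |>.sub hq7
    have hG0 : G 0 = 0 := by simp [hG, Real.negMulLog]
    have hL : ((((-Real.log c - 1) * a + (-Real.log d - 1) * b) + (-Real.log b - 1) * a)
          + (-Real.log d - 1) * c - (-Real.log d - 1) * (a + b + c)) + a * 1
          - Real.negMulLog a < 0 := by
      have e1 : ((((-Real.log c - 1) * a + (-Real.log d - 1) * b) + (-Real.log b - 1) * a)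
          + (-Real.log d - 1) * c - (-Real.log d - 1) * (a + b + c)) + a * 1
          - Real.negMulLog a = a * (Real.log (a * d) - Real.log (b * c)) := by
        rw [Real.log_mul ha.ne' hd0.ne', Real.log_mul hb.ne' hc.ne', Real.negMulLog]
        ring
      rw [e1]
      exact mul_neg_of_pos_of_neg ha
        (sub_neg.mpr (Real.log_lt_log (mul_pos ha hd0) hlt))
    have hslope := slope_tendsto_of_deriv G _ H hG0
    exact neg_of_div_eventually G (hslope.eventually_lt_const hL)
  · -- case d = 0
    subst hd0
    set R : ℝ → ℝ := fun q =>
        (Real.negMulLog (c + q * a) - Real.negMulLog c)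
        + q * Real.negMulLog b
        + (Real.negMulLog (b + q * a) - Real.negMulLog b)
        + q * Real.negMulLog c
        - q * Real.negMulLog (a + b + c)
        + a * Real.negMulLog (1 - q) - q * Real.negMulLog a with hR
    have hGR : ∀ q : ℝ, G q = R q - a * Real.negMulLog q := by
      intro q
      simp only [hG, hR, zero_add, Real.negMulLog_zero, Real.negMulLog_mul]
      ring
    have hqb : HasDerivAt (fun q : ℝ => q * Real.negMulLog b) (Real.negMulLog b) 0 := by
      simpa using (hasDerivAt_id (0:ℝ)).mul_const (Real.negMulLog b)
    have hqc : HasDerivAt (fun q : ℝ => q * Real.negMulLog c) (Real.negMulLog c) 0 := by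
      simpa using (hasDerivAt_id (0:ℝ)).mul_const (Real.negMulLog c)
    have hqs : HasDerivAt (fun q : ℝ => q * Real.negMulLog (a + b + c))
        (Real.negMulLog (a + b + c)) 0 := by
      simpa using (hasDerivAt_id (0:ℝ)).mul_const (Real.negMulLog (a + b + c))
    have HR : HasDerivAt R
        (((((-Real.log c - 1) * a + Real.negMulLog b) + (-Real.log b - 1) * a)
          + Real.negMulLog c - Real.negMulLog (a + b + c)) + a * 1
          - Real.negMulLog a) 0 := by
      exact ((((((hd_nml_affine c a hc.ne').sub_const _).add hqb).add
        ((hd_nml_affine b a hb.ne').sub_const _)).add hqc).sub hqs).add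
        (hd_nml_one_sub.const_mul a) |>.sub hq7
    have hR0 : R 0 = 0 := by simp [hR, Real.negMulLog]
    have hslope := slope_tendsto_of_deriv R _ HR hR0
    have t2 : Tendsto (fun q : ℝ => a * Real.log q) (nhdsWithin 0 (Set.Ioi 0)) atBot :=
      Real.tendsto_log_nhdsGT_zero.const_mul_atBot ha
    have t3 : Tendsto (fun q : ℝ => R q / q + a * Real.log q)
        (nhdsWithin 0 (Set.Ioi 0)) atBot := hslope.add_atBot t2
    have hev0 : ∀ᶠ q in nhdsWithin (0:ℝ) (Set.Ioi 0),
        R q / q + a * Real.log q = G q / q := by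
      filter_upwards [self_mem_nhdsWithin] with q hq
      have hq0 : (q:ℝ) ≠ 0 := ne_of_gt hq
      rw [hGR q]
      simp only [Real.negMulLog]
      field_simp
      ring
    have t4 : Tendsto (fun q : ℝ => G q / q) (nhdsWithin (0:ℝ) (Set.Ioi 0)) atBot :=
      t3.congr' (by filter_upwards [hev0] with q h using h)
    exact neg_of_div_eventually G (t4.eventually (eventually_lt_atBot 0))

end MainNeg

/-- The Gács–Körner construction: with `α = p(0,0) > 0`, `β = p(0,1) > 0`,
`γ = p(1,0) > 0` and either (`δ = p(1,1) > 0` with `αδ < βγ`) or `δ = 0`,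
the variables `U, V` which with probability `1-q` copy `X, Y` and with
probability `q` equal `max{2,X}, max{2,Y}` make the Ingleton expression
`-I(X;Y)+I(X;Y|U)+I(X;Y|V)+I(U;V)` strictly negative for all sufficiently
small `q > 0`.  (Alphabets are `0`-indexed: the paper's symbols `1, 2`
are `0, 1` here, and `max{2,·}` is `max 1 ·`.) -/
theorem stmt16 {N M : ℕ} (p : Fin (N + 2) × Fin (M + 2) → ℝ) (hp : IsPmf p)
    (hα : 0 < p (0, 0)) (hβ : 0 < p (0, 1)) (hγ : 0 < p (1, 0))
    (hδ : (0 < p (1, 1) ∧ p (0, 0) * p (1, 1) < p (0, 1) * p (1, 0)) ∨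
      p (1, 1) = 0) :
    ∃ ε > (0:ℝ), ∀ q : ℝ, 0 < q → q < ε →
      (fun pq : (Fin (N + 2) × Fin (M + 2)) × Bool → ℝ =>
        (fun (X : ((Fin (N + 2) × Fin (M + 2)) × Bool) → Fin (N + 2))
             (Y : ((Fin (N + 2) × Fin (M + 2)) × Bool) → Fin (M + 2))
             (U : ((Fin (N + 2) × Fin (M + 2)) × Bool) → Fin (N + 2))
             (V : ((Fin (N + 2) × Fin (M + 2)) × Bool) → Fin (M + 2)) =>
          -(mi pq X Y) + cmi pq X Y U + cmi pq X Y V + mi pq U V)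
          (fun w => w.1.1) (fun w => w.1.2)
          (fun w => if w.2 then w.1.1 else max 1 w.1.1)
          (fun w => if w.2 then w.1.2 else max 1 w.1.2))
        (fun w => p w.1 * (if w.2 then 1 - q else q)) < 0 := by
  obtain ⟨ε, hε, H⟩ := main_neg hα hβ hγ hδ
  refine ⟨ε, hε, fun q hq hqε => ?_⟩
  exact lt_of_eq_of_lt (ing_formula p q) (H q hq hqε)
end

section
/- If the joint probability matrix of finitely supported (X,Y) is not, after restriction to each connected component of its block graph, a product distribution on a combinatorial rectangle, then there exist indices i₁ ≠ i₂, j₁ ≠ j₂ such that, writing α = p(i₁,j₁), β = p(i₁,j₂), γ = p(i₂,j₁), δ = p(i₂,j₂), either (α, β, γ > 0 and δ = 0) or (α, β, γ, δ > 0 and αδ ≠ βγ). -/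
open Real BigOperators Finset

/-- If the joint pmf of `(X,Y)` is not, on each connected component of its
block graph, a product distribution on a combinatorial rectangle, then there
is a `2×2` configuration with `α, β, γ > 0, δ = 0`, or with all four entries
positive and `αδ ≠ βγ`. -/
theorem stmt17 {α β : Type} [Fintype α] [DecidableEq α] [Fintype β] [DecidableEq β]
    (p : α × β → ℝ) (hp : IsPmf p)
    (h : ¬ (∀ u v : α × β, 0 < p u → 0 < p v →
      Relation.ReflTransGen (blockStep p) u v →
      0 < p (u.1, v.2) ∧ p u * p v = p (u.1, v.2) * p (v.1, u.2))) :
    ∃ (i₁ i₂ : α) (j₁ j₂ : β), i₁ ≠ i₂ ∧ j₁ ≠ j₂ ∧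
      ((0 < p (i₁, j₁) ∧ 0 < p (i₁, j₂) ∧ 0 < p (i₂, j₁) ∧ p (i₂, j₂) = 0) ∨
       (0 < p (i₁, j₁) ∧ 0 < p (i₁, j₂) ∧ 0 < p (i₂, j₁) ∧ 0 < p (i₂, j₂) ∧
        p (i₁, j₁) * p (i₂, j₂) ≠ p (i₁, j₂) * p (i₂, j₁))) := by
  by_contra hc
  apply h
  have hnn := hp.1
  have H : ∀ i₁ i₂ j₁ j₂, i₁ ≠ i₂ → j₁ ≠ j₂ → 0 < p (i₁, j₁) → 0 < p (i₁, j₂) →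
      0 < p (i₂, j₁) → 0 < p (i₂, j₂) ∧ p (i₁, j₁) * p (i₂, j₂) = p (i₁, j₂) * p (i₂, j₁) := by
    intro i₁ i₂ j₁ j₂ hi hj h1 h2 h3
    rcases lt_or_eq_of_le (hnn (i₂, j₂)) with h4 | h4
    · refine ⟨h4, ?_⟩
      by_contra hne
      exact hc ⟨i₁, i₂, j₁, j₂, hi, hj, Or.inr ⟨h1, h2, h3, h4, hne⟩⟩
    · exact absurd ⟨i₁, i₂, j₁, j₂, hi, hj, Or.inl ⟨h1, h2, h3, h4.symm⟩⟩ hc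
  intro u v hu hv hchain
  suffices hS : 0 < p (u.1, v.2) ∧ 0 < p (v.1, u.2) ∧
      p u * p v = p (u.1, v.2) * p (v.1, u.2) from ⟨hS.1, hS.2.2⟩
  clear hv
  induction hchain with
  | refl => exact ⟨by simpa using hu, by simpa using hu, by rw [Prod.mk.eta]⟩
  | @tail b c hch hstep ih =>
    obtain ⟨hb, hcpos, hbc⟩ := hstep
    obtain ⟨h1, h2, h3⟩ := ih
    have hbne : p b ≠ 0 := ne_of_gt hb
    rcases hbc with hrow | hcol
    · -- b.1 = c.1, column changes
      by_cases hbc2 : b.2 = c.2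
      · have hbc' : b = c := Prod.ext hrow hbc2
        rw [← hbc']; exact ⟨h1, h2, h3⟩
      · have hpc : p (b.1, c.2) = p c := by rw [hrow, Prod.mk.eta]
        by_cases hub : u.1 = b.1
        · refine ⟨?_, ?_, ?_⟩
          · rw [hub, hrow, Prod.mk.eta]; exact hcpos
          · rw [← hrow, ← hub, Prod.mk.eta]; exact hu
          · rw [hub, hrow, Prod.mk.eta, ← hrow, ← hub, Prod.mk.eta, mul_comm]
        · obtain ⟨k1, k2⟩ := H b.1 u.1 b.2 c.2 (fun e => hub e.symm) hbc2
            (by rw [Prod.mk.eta]; exact hb) (by rw [hpc]; exact hcpos) h1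
          have k2' : p b * p (u.1, c.2) = p (b.1, c.2) * p (u.1, b.2) := by
            rw [← k2, Prod.mk.eta]
          refine ⟨k1, by rw [← hrow]; exact h2, ?_⟩
          rw [← hrow, ← hpc]
          apply mul_left_cancel₀ hbne
          calc p b * (p u * p (b.1, c.2)) = (p u * p b) * p (b.1, c.2) := by ring
            _ = (p (u.1, b.2) * p (b.1, u.2)) * p (b.1, c.2) := by rw [h3]
            _ = (p b * p (u.1, c.2)) * p (b.1, u.2) := by rw [k2']; ring
            _ = p b * (p (u.1, c.2) * p (b.1, u.2)) := by ring
    · -- b.2 = c.2, row changes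
      by_cases hbc1 : b.1 = c.1
      · have hbc' : b = c := Prod.ext hbc1 hcol
        rw [← hbc']; exact ⟨h1, h2, h3⟩
      · have hpc : p (c.1, b.2) = p c := by rw [hcol, Prod.mk.eta]
        by_cases hub : u.2 = b.2
        · refine ⟨?_, ?_, ?_⟩
          · rw [← hcol, ← hub, Prod.mk.eta]; exact hu
          · rw [hub, hpc]; exact hcpos
          · rw [hub, hpc, ← hcol, ← hub, Prod.mk.eta]
        · obtain ⟨k1, k2⟩ := H b.1 c.1 b.2 u.2 hbc1 (fun e => hub e.symm)
            (by rw [Prod.mk.eta]; exact hb) h2 (by rw [hpc]; exact hcpos)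
          have k2' : p b * p (c.1, u.2) = p (b.1, u.2) * p (c.1, b.2) := by
            rw [← k2, Prod.mk.eta]
          refine ⟨by rw [← hcol]; exact h1, k1, ?_⟩
          rw [← hcol, ← hpc]
          apply mul_left_cancel₀ hbne
          calc p b * (p u * p (c.1, b.2)) = (p u * p b) * p (c.1, b.2) := by ring
            _ = (p (u.1, b.2) * p (b.1, u.2)) * p (c.1, b.2) := by rw [h3]
            _ = (p b * p (c.1, u.2)) * p (u.1, b.2) := by rw [k2']; ring
            _ = p b * (p (u.1, b.2) * p (c.1, u.2)) := by ring
end
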